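/- arXiv:0905.4798 — 3 statements merged into one kernel-verified Lean document; each statement's English description precedes it below -/
import Mathlib

section
/- Let Γ be a finite-index congruence subgroup of SL₂(ℤ) with general level N. Then Γ(2N) ≤ Γ; consequently the level of Γ (least M with Γ(M) ≤ Γ) is either N or 2N. -/
open Matrix CongruenceSubgroup
open scoped MatrixGroups

/-- T = [[1,1],[0,1]]. -/
def T : SL(2, ℤ) := ⟨!![1, 1; 0, 1], by rw [Matrix.det_fin_two_of]; ring⟩

/-- The width of the cusp g∞: the least n > 0 with ±g Tⁿ g⁻¹ ∈ Γ. -/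
noncomputable def cuspWidth (Γ : Subgroup SL(2, ℤ)) (g : SL(2, ℤ)) : ℕ :=
  sInf {n : ℕ | 0 < n ∧ (g * T ^ n * g⁻¹ ∈ Γ ∨ -(g * T ^ n * g⁻¹) ∈ Γ)}

/-- N is the general level of Γ: the lcm of all cusp widths of Γ. -/
def IsGeneralLevel (Γ : Subgroup SL(2, ℤ)) (N : ℕ) : Prop :=
  0 < N ∧ (∀ g : SL(2, ℤ), cuspWidth Γ g ∣ N) ∧
    ∀ m : ℕ, (∀ g : SL(2, ℤ), cuspWidth Γ g ∣ m) → N ∣ m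

/-- A subgroup of SL₂(ℤ) is congruence if it contains Γ(M) for some M ≥ 1. -/
def IsCongruence (Γ : Subgroup SL(2, ℤ)) : Prop := ∃ M : ℕ, 0 < M ∧ Gamma M ≤ Γ

namespace Wohl

abbrev M2 := Matrix (Fin 2) (Fin 2) ℤ

/-- congruence of matrices mod k -/
def MCong (k : ℕ) (A B : M2) : Prop := ∀ i j, (k : ℤ) ∣ (A i j - B i j)

lemma MCong.refl (k : ℕ) (A : M2) : MCong k A A := fun i j => by simp

lemma MCong.mul {k : ℕ} {A B C D : M2} (h1 : MCong k A B) (h2 : MCong k C D) :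
    MCong k (A * C) (B * D) := by
  intro i j
  have : (A * C) i j - (B * D) i j =
      ((A i 0 - B i 0) * C 0 j + B i 0 * (C 0 j - D 0 j)) +
      ((A i 1 - B i 1) * C 1 j + B i 1 * (C 1 j - D 1 j)) := by
    simp [Matrix.mul_apply, Fin.sum_univ_two]; ring
  rw [this]
  exact dvd_add (dvd_add ((h1 i 0).mul_right _) ((h2 0 j).mul_left _))
    (dvd_add ((h1 i 1).mul_right _) ((h2 1 j).mul_left _))

lemma int_dvd_iff_cast {k : ℕ} {x y : ℤ} : (x : ZMod k) = (y : ZMod k) ↔ (k : ℤ) ∣ (x - y) := by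
  rw [ZMod.intCast_eq_intCast_iff, Int.modEq_iff_dvd]
  exact ⟨fun h => dvd_sub_comm.mp h, fun h => dvd_sub_comm.mp h⟩

lemma gamma_iff (k : ℕ) (A : SL(2, ℤ)) : A ∈ Gamma k ↔ MCong k A.1 1 := by
  rw [Gamma_mem]
  constructor
  · rintro ⟨h0, h1, h2, h3⟩ i j
    fin_cases i <;> fin_cases j <;>
      simp only [Matrix.one_apply, Fin.zero_eta, Fin.mk_one, ite_true, ite_false, ne_eq] <;>
      [ (have := h0); (have := h1); (have := h2); (have := h3)] <;>
      · rw [← int_dvd_iff_cast]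
        push_cast
        simpa using this
  · intro h
    refine ⟨?_, ?_, ?_, ?_⟩ <;>
      [ (have := h 0 0); (have := h 0 1); (have := h 1 0); (have := h 1 1)] <;>
      · rw [← int_dvd_iff_cast] at this
        push_cast at this
        simpa [Matrix.one_apply] using this


lemma T_eq : T = ModularGroup.T := Subtype.ext rfl

lemma coe_T_zpow (m : ℤ) : (T ^ m).1 = !![1, m; 0, 1] := by
  rw [T_eq]; exact ModularGroup.coe_T_zpow m

/-- upper elementary matrix -/
def R (n : ℕ) (t : ℤ) : SL(2, ℤ) :=
  ⟨!![1, (n : ℤ) * t; 0, 1], by rw [Matrix.det_fin_two_of]; ring⟩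

/-- lower elementary matrix -/
def L (n : ℕ) (t : ℤ) : SL(2, ℤ) :=
  ⟨!![1, 0; (n : ℤ) * t, 1], by rw [Matrix.det_fin_two_of]; ring⟩

/-- conjugate of T-power by [[1,0],[1,1]] -/
def W (n : ℕ) (t : ℤ) : SL(2, ℤ) :=
  ⟨!![1 - (n : ℤ) * t, (n : ℤ) * t; -((n : ℤ) * t), 1 + (n : ℤ) * t],
    by rw [Matrix.det_fin_two_of]; ring⟩

section mem
variable {Γ : Subgroup SL(2, ℤ)} {n : ℕ} (hΔ : ∀ g : SL(2, ℤ), g * T ^ n * g⁻¹ ∈ Γ)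

include hΔ

lemma conj_zpow_mem (g : SL(2, ℤ)) (t : ℤ) : g * T ^ ((n : ℤ) * t) * g⁻¹ ∈ Γ := by
  have h := Subgroup.zpow_mem Γ (hΔ g) t
  rwa [conj_zpow, ← zpow_natCast T n, ← _root_.zpow_mul] at h

lemma R_mem (t : ℤ) : R n t ∈ Γ := by
  have h := conj_zpow_mem hΔ 1 t
  rw [one_mul, inv_one, mul_one] at h
  convert h using 1
  exact Subtype.ext (coe_T_zpow _).symm

lemma L_mem (t : ℤ) : L n t ∈ Γ := by
  have h := conj_zpow_mem hΔ ModularGroup.S (-t)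
  convert h using 1
  rw [eq_comm, mul_inv_eq_iff_eq_mul]
  apply Subtype.ext
  rw [Matrix.SpecialLinearGroup.coe_mul, Matrix.SpecialLinearGroup.coe_mul, ModularGroup.coe_S, coe_T_zpow]
  show (!![0,-1;1,0] : M2) * !![1, (n:ℤ)*(-t); 0,1] = !![1,0;(n:ℤ)*t,1] * !![0,-1;1,0]
  rw [Matrix.mul_fin_two, Matrix.mul_fin_two]
  congr 1 <;> ring

lemma W_mem (t : ℤ) : W n t ∈ Γ := by
  have h := conj_zpow_mem hΔ (⟨!![1,0;1,1], by rw [Matrix.det_fin_two_of]; ring⟩ : SL(2, ℤ)) t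
  convert h using 1
  rw [eq_comm]
  refine mul_inv_eq_iff_eq_mul.mpr ?_
  apply Subtype.ext
  show (!![1,0;1,1] : M2) * (T ^ ((n:ℤ)*t)).1 = (W n t).1 * !![1,0;1,1]
  rw [coe_T_zpow]
  show (!![1,0;1,1] : M2) * !![1, (n:ℤ)*t; 0,1]
      = !![1 - (n:ℤ)*t, (n:ℤ)*t; -((n:ℤ)*t), 1+(n:ℤ)*t] * !![1,0;1,1]
  rw [Matrix.mul_fin_two, Matrix.mul_fin_two]
  congr 1 <;> ring

end mem

lemma R_mcong (n : ℕ) (t : ℤ) : MCong n (R n t).1 1 := by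
  intro i j
  fin_cases i <;> fin_cases j <;> simp [R, Matrix.one_apply]

lemma L_mcong (n : ℕ) (t : ℤ) : MCong n (L n t).1 1 := by
  intro i j
  fin_cases i <;> fin_cases j <;> simp [L, Matrix.one_apply]


lemma prod_expand (n : ℤ) (B Y₁ Y₂ Y₃ : M2) :
    (1 + n • B) * (1 + n • Y₁) * (1 + n • Y₂) * (1 + n • Y₃) =
      1 + n • (B + Y₁ + Y₂ + Y₃) +
        (n * n) • (B*Y₁ + B*Y₂ + B*Y₃ + Y₁*Y₂ + Y₁*Y₃ + Y₂*Y₃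
          + n • (B*(Y₁*Y₂) + B*(Y₁*Y₃) + B*(Y₂*Y₃) + Y₁*(Y₂*Y₃)) + (n*n) • (B*(Y₁*(Y₂*Y₃)))) := by
  simp only [mul_add, add_mul, mul_one, one_mul, Matrix.smul_mul, Matrix.mul_smul,
    smul_smul, smul_add, mul_assoc]
  module

lemma key_case_dvd (Γ : Subgroup SL(2, ℤ)) (n p : ℕ) (hn : 0 < n) (hpn : p ∣ n)
    (hΔ : ∀ g : SL(2, ℤ), g * T ^ n * g⁻¹ ∈ Γ) (hm : Gamma (n * p) ≤ Γ) :
    Gamma n ≤ Γ := by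
  intro A hA
  rw [gamma_iff] at hA
  obtain ⟨α, hα⟩ := hA 0 0
  obtain ⟨β, hβ⟩ := hA 0 1
  obtain ⟨γ, hγ⟩ := hA 1 0
  obtain ⟨δ, hδ⟩ := hA 1 1
  simp only [Matrix.one_apply, if_true, if_false, Fin.zero_eta, Fin.mk_one, ne_eq,
    zero_ne_one, one_ne_zero, ite_true, ite_false, sub_zero, reduceIte] at hα hβ hγ hδ
  set B : M2 := !![α, β; γ, δ] with hB
  have hAmat : A.1 = 1 + (n : ℤ) • B := by
    ext i j
    fin_cases i <;> fin_cases j <;>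
      simp [Matrix.add_apply, Matrix.smul_apply, Matrix.one_apply, hB] <;> linarith
  have hdet : A.1.det = 1 := A.2
  rw [Matrix.det_fin_two] at hdet
  have e00 : A.1 0 0 = 1 + (n:ℤ) * α := by linarith
  have e01 : A.1 0 1 = (n:ℤ) * β := by linarith
  have e10 : A.1 1 0 = (n:ℤ) * γ := by linarith
  have e11 : A.1 1 1 = 1 + (n:ℤ) * δ := by linarith
  rw [e00, e01, e10, e11] at hdet
  have hscal : α + δ + (n:ℤ) * (α * δ - β * γ) = 0 := by
    have h2 : (n:ℤ) * (α + δ + (n:ℤ) * (α * δ - β * γ)) = 0 := by linear_combination hdet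
    rcases mul_eq_zero.mp h2 with h | h
    · exact absurd h (by exact_mod_cast hn.ne')
    · exact h
  set Y₁ : M2 := !![0, -(β+α); 0, 0] with hY₁
  set Y₂ : M2 := !![0, 0; α - γ, 0] with hY₂
  set Y₃ : M2 := !![-α, α; -α, α] with hY₃
  have hR : (R n (-(β+α))).1 = 1 + (n:ℤ) • Y₁ := by
    ext i j
    fin_cases i <;> fin_cases j <;>
      simp [R, Matrix.add_apply, Matrix.smul_apply, Matrix.one_apply, hY₁] <;> ring
  have hL : (L n (α - γ)).1 = 1 + (n:ℤ) • Y₂ := by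
    ext i j
    fin_cases i <;> fin_cases j <;>
      simp [L, Matrix.add_apply, Matrix.smul_apply, Matrix.one_apply, hY₂] <;> ring
  have hW : (W n α).1 = 1 + (n:ℤ) • Y₃ := by
    ext i j
    fin_cases i <;> fin_cases j <;>
      simp [W, Matrix.add_apply, Matrix.smul_apply, Matrix.one_apply, hY₃] <;> ring
  have hsum : B + Y₁ + Y₂ + Y₃ = !![0, 0; 0, δ + α] := by
    ext i j
    fin_cases i <;> fin_cases j <;>
      simp [hB, hY₁, hY₂, hY₃, Matrix.add_apply] <;> ring
  set D : SL(2, ℤ) := R n (-(β+α)) * L n (α - γ) * W n α with hD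
  have hDmem : D ∈ Γ := Subgroup.mul_mem _ (Subgroup.mul_mem _ (R_mem hΔ _) (L_mem hΔ _)) (W_mem hΔ _)
  set C : M2 := B*Y₁ + B*Y₂ + B*Y₃ + Y₁*Y₂ + Y₁*Y₃ + Y₂*Y₃
          + (n:ℤ) • (B*(Y₁*Y₂) + B*(Y₁*Y₃) + B*(Y₂*Y₃) + Y₁*(Y₂*Y₃)) + ((n:ℤ)*(n:ℤ)) • (B*(Y₁*(Y₂*Y₃)))
    with hC
  have hADcoe : (A * D).1 = 1 + (n:ℤ) • (!![0, 0; 0, δ + α] : M2) + ((n:ℤ)*(n:ℤ)) • C := by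
    rw [hD]
    simp only [Matrix.SpecialLinearGroup.coe_mul]
    rw [hAmat, hR, hL, hW, ← mul_assoc, ← mul_assoc, prod_expand, hsum, hC]
  have hent : ∀ i j, (A * D).1 i j - (1 : M2) i j =
      (n:ℤ) * ((!![0, 0; 0, δ + α] : M2) i j) + ((n:ℤ)*(n:ℤ)) * C i j := by
    intro i j
    rw [hADcoe]
    simp only [Matrix.add_apply, Matrix.smul_apply, smul_eq_mul]
    ring
  have hADmem : A * D ∈ Gamma (n * p) := by
    rw [gamma_iff]
    intro i j
    rw [hent i j]
    obtain ⟨m, hme⟩ := hpn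
    fin_cases i <;> fin_cases j <;>
      simp only [Matrix.cons_val_zero, Matrix.cons_val_one, Matrix.head_cons,
        Matrix.head_fin_const, Matrix.cons_val', Matrix.empty_val', Matrix.cons_val_fin_one,
        Matrix.of_apply, Fin.zero_eta, Fin.mk_one, Fin.isValue]
    · exact ⟨(m:ℤ) * C 0 0, by subst hme; push_cast; ring⟩
    · exact ⟨(m:ℤ) * C 0 1, by subst hme; push_cast; ring⟩
    · exact ⟨(m:ℤ) * C 1 0, by subst hme; push_cast; ring⟩
    · refine ⟨-((m:ℤ) * (α * δ - β * γ)) + (m:ℤ) * C 1 1, ?_⟩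
      subst hme
      push_cast at hscal ⊢
      linear_combination ((p:ℤ) * (m:ℤ)) * hscal
  have := Subgroup.mul_mem _ (hm hADmem) (Subgroup.inv_mem _ hDmem)
  rwa [mul_inv_cancel_right] at this

lemma mcong_inv {k : ℕ} {E : SL(2, ℤ)} (h : MCong k E.1 1) : MCong k (E⁻¹).1 1 := by
  intro i j
  rw [SpecialLinearGroup.SL2_inv_expl E]
  fin_cases i <;> fin_cases j <;>
    simp only [Matrix.cons_val_zero, Matrix.cons_val_one, Matrix.head_cons, Matrix.one_apply,
      Fin.zero_eta, Fin.mk_one, ite_true, ite_false, ne_eq, zero_ne_one, one_ne_zero, reduceIte]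
  · simpa using h 1 1
  · simpa [dvd_neg] using h 0 1
  · simpa [dvd_neg] using h 1 0
  · simpa using h 0 0

section coprime

variable {Γ : Subgroup SL(2, ℤ)} {n p : ℕ}

lemma exists_approx (hp : p.Prime) (hpn : ¬ p ∣ n)
    (hΔ : ∀ g : SL(2, ℤ), g * T ^ n * g⁻¹ ∈ Γ) (A : SL(2, ℤ))
    (hc : ((A.1 1 0 : ℤ) : ZMod p) ≠ 0) :
    ∃ E : SL(2, ℤ), E ∈ Γ ∧ MCong p A.1 E.1 ∧ MCong n E.1 1 := by
  haveI := Fact.mk hp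
  have hdetz : ((A.1 0 0 : ℤ) : ZMod p) * ((A.1 1 1 : ℤ) : ZMod p)
      - ((A.1 0 1 : ℤ) : ZMod p) * ((A.1 1 0 : ℤ) : ZMod p) = 1 := by
    have h2 : A.1.det = 1 := A.2
    rw [Matrix.det_fin_two] at h2
    exact_mod_cast congrArg (Int.cast : ℤ → ZMod p) h2
  have hn0 : ((n : ℕ) : ZMod p) ≠ 0 := by
    rw [Ne, ZMod.natCast_eq_zero_iff]; exact hpn
  have hex : ∀ x : ZMod p, ∃ t : ℤ, (t : ZMod p) = x := fun x =>
    ⟨(x.val : ℤ), by push_cast [ZMod.natCast_val, ZMod.cast_id]; rfl⟩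
  obtain ⟨r, hr⟩ := hex ((((A.1 0 0 : ℤ) : ZMod p) - 1) * ((A.1 1 0 : ℤ) : ZMod p)⁻¹
      * ((n : ZMod p))⁻¹)
  obtain ⟨s, hs⟩ := hex (((A.1 1 0 : ℤ) : ZMod p) * ((n : ZMod p))⁻¹)
  obtain ⟨u, hu⟩ := hex ((((A.1 1 1 : ℤ) : ZMod p) - 1) * ((A.1 1 0 : ℤ) : ZMod p)⁻¹
      * ((n : ZMod p))⁻¹)
  refine ⟨R n r * L n s * R n u, ?_, ?_, ?_⟩
  · exact mul_mem (mul_mem (R_mem hΔ _) (L_mem hΔ _)) (R_mem hΔ _)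
  · have hE : (R n r * L n s * R n u).1 =
        !![1 + (n:ℤ)*r*((n:ℤ)*s),
            (1 + (n:ℤ)*r*((n:ℤ)*s))*((n:ℤ)*u) + (n:ℤ)*r;
           (n:ℤ)*s, (n:ℤ)*s*((n:ℤ)*u) + 1] := by
      simp only [Matrix.SpecialLinearGroup.coe_mul]
      simp only [R, L, Matrix.mul_fin_two]
      congr 1 <;> ring
    intro i j
    rw [hE, ← int_dvd_iff_cast]
    fin_cases i <;> fin_cases j <;>
      ( simp only [Matrix.cons_val_zero, Matrix.cons_val_one, Matrix.head_cons,
          Matrix.head_fin_const, Matrix.cons_val', Matrix.empty_val', Matrix.cons_val_fin_one,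
          Matrix.of_apply, Fin.zero_eta, Fin.mk_one, Fin.isValue]
        push_cast
        simp only [hr, hs, hu] )
    · field_simp
      ring
    · field_simp
      linear_combination (-1 : ZMod p) * hdetz
    · field_simp
    · field_simp
      ring
  · have h2 := MCong.mul (MCong.mul (R_mcong n r) (L_mcong n s)) (R_mcong n u)
    rw [mul_one, mul_one] at h2
    intro i j
    have h3 := h2 i j
    rwa [← Matrix.SpecialLinearGroup.coe_mul, ← Matrix.SpecialLinearGroup.coe_mul] at h3

lemma key_case_coprime (hn : 0 < n) (hp : p.Prime) (hpn : ¬ p ∣ n)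
    (hΔ : ∀ g : SL(2, ℤ), g * T ^ n * g⁻¹ ∈ Γ) (hm : Gamma (n * p) ≤ Γ) :
    Gamma n ≤ Γ := by
  intro A hA
  haveI := Fact.mk hp
  rw [gamma_iff] at hA
  have hn0 : ((n : ℕ) : ZMod p) ≠ 0 := by
    rw [Ne, ZMod.natCast_eq_zero_iff]; exact hpn
  obtain ⟨E, hEΓ, hEp, hEn⟩ : ∃ E, E ∈ Γ ∧ MCong p A.1 E.1 ∧ MCong n E.1 1 := by
    by_cases hc : ((A.1 1 0 : ℤ) : ZMod p) ≠ 0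
    · exact exists_approx hp hpn hΔ A hc
    · push_neg at hc
      have hdetz : ((A.1 0 0 : ℤ) : ZMod p) * ((A.1 1 1 : ℤ) : ZMod p)
          - ((A.1 0 1 : ℤ) : ZMod p) * ((A.1 1 0 : ℤ) : ZMod p) = 1 := by
        have h2 : A.1.det = 1 := A.2
        rw [Matrix.det_fin_two] at h2
        exact_mod_cast congrArg (Int.cast : ℤ → ZMod p) h2
      have ha : ((A.1 0 0 : ℤ) : ZMod p) ≠ 0 := by
        intro h
        rw [h, hc] at hdetz
        simp at hdetz
      have hex : ∀ x : ZMod p, ∃ t : ℤ, (t : ZMod p) = x := fun x =>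
        ⟨(x.val : ℤ), by push_cast [ZMod.natCast_val, ZMod.cast_id]; rfl⟩
      obtain ⟨w, hw⟩ := hex ((n : ZMod p))⁻¹
      have hLA : ((L n w * A).1 1 0 : ℤ) = (n : ℤ) * w * A.1 0 0 + A.1 1 0 := by
        simp only [Matrix.SpecialLinearGroup.coe_mul]
        simp only [L]
        rw [Matrix.mul_apply, Fin.sum_univ_two]
        simp
      have hc' : (((L n w * A).1 1 0 : ℤ) : ZMod p) ≠ 0 := by
        rw [hLA]
        push_cast
        rw [hw, hc, add_zero, mul_inv_cancel₀ hn0, one_mul]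
        exact ha
      obtain ⟨E', hE'Γ, hE'p, hE'n⟩ := exists_approx hp hpn hΔ (L n w * A) hc'
      have hLinv : L n (-w) * L n w = 1 := by
        apply Subtype.ext
        simp only [Matrix.SpecialLinearGroup.coe_mul, Matrix.SpecialLinearGroup.coe_one]
        simp only [L, Matrix.mul_fin_two]
        rw [Matrix.one_fin_two]
        congr 1 <;> ring
      refine ⟨L n (-w) * E', mul_mem (L_mem hΔ _) hE'Γ, ?_, ?_⟩
      · have h1 := MCong.mul (MCong.refl p (L n (-w)).1) hE'p
        have h2 : (L n (-w)).1 * (L n w * A).1 = A.1 := by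
          rw [← Matrix.SpecialLinearGroup.coe_mul, ← mul_assoc, hLinv, one_mul]
        rw [h2, ← Matrix.SpecialLinearGroup.coe_mul] at h1
        exact h1
      · have h1 := MCong.mul (L_mcong n (-w)) hE'n
        rw [one_mul, ← Matrix.SpecialLinearGroup.coe_mul] at h1
        exact h1
  have h1 : A * E⁻¹ ∈ Gamma (n * p) := by
    rw [gamma_iff]
    have hp1 : MCong p ((A * E⁻¹).1) 1 := by
      have h := MCong.mul hEp (MCong.refl p (E⁻¹).1)
      rw [show E.1 * (E⁻¹).1 = 1 by
          rw [← Matrix.SpecialLinearGroup.coe_mul, mul_inv_cancel, Matrix.SpecialLinearGroup.coe_one]] at h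
      rwa [← Matrix.SpecialLinearGroup.coe_mul] at h
    have hn1 : MCong n ((A * E⁻¹).1) 1 := by
      have h := MCong.mul hA (mcong_inv hEn)
      rwa [one_mul, ← Matrix.SpecialLinearGroup.coe_mul] at h
    intro i j
    have hco : IsCoprime (n : ℤ) (p : ℤ) := by
      rw [Nat.isCoprime_iff_coprime]
      exact Nat.coprime_comm.mp (hp.coprime_iff_not_dvd.mpr hpn)
    have := hco.mul_dvd (hn1 i j) (hp1 i j)
    rwa [show ((n : ℤ) * (p : ℤ)) = ((n * p : ℕ) : ℤ) by push_cast; ring] at this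
  have h2 := mul_mem (hm h1) hEΓ
  rwa [inv_mul_cancel_right] at h2

end coprime

lemma gamma_dvd_le {a b : ℕ} (h : a ∣ b) : Gamma b ≤ Gamma a := by
  intro A hA
  rw [gamma_iff] at hA ⊢
  intro i j
  exact dvd_trans (Int.natCast_dvd_natCast.mpr h) (hA i j)

lemma wohlfahrt : ∀ q : ℕ, 0 < q → ∀ n : ℕ, 0 < n → ∀ Γ : Subgroup SL(2, ℤ),
    (∀ g : SL(2, ℤ), g * T ^ n * g⁻¹ ∈ Γ) → Gamma (n * q) ≤ Γ → Gamma n ≤ Γ := by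
  intro q
  induction q using Nat.strong_induction_on with
  | _ q ih =>
    intro hq n hn Γ hΔ hm
    by_cases hq1 : q = 1
    · subst hq1
      rwa [mul_one] at hm
    · set p := q.minFac with hpdef
      have hpp : p.Prime := Nat.minFac_prime hq1
      obtain ⟨q₂, hq₂⟩ : p ∣ q := q.minFac_dvd
      have hq₂pos : 0 < q₂ := by
        rcases Nat.eq_zero_or_pos q₂ with h | h
        · rw [h, mul_zero] at hq₂; omega
        · exact h
      have hq₂lt : q₂ < q := by
        have h2 : 2 ≤ p := hpp.two_le
        calc q₂ < 2 * q₂ := by omega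
          _ ≤ p * q₂ := Nat.mul_le_mul_right _ h2
          _ = q := hq₂.symm
      have hΔ' : ∀ g : SL(2, ℤ), g * T ^ (n * p) * g⁻¹ ∈ Γ := by
        intro g
        have h3 : g * T ^ (n * p) * g⁻¹ = (g * T ^ n * g⁻¹) ^ p := by
          rw [_root_.conj_pow, ← pow_mul]
        rw [h3]
        exact Subgroup.pow_mem _ (hΔ g) p
      have hstep : Gamma (n * p) ≤ Γ := by
        apply ih q₂ hq₂lt hq₂pos (n * p) (Nat.mul_pos hn hpp.pos) Γ hΔ'
        have h4 : n * p * q₂ = n * q := by rw [hq₂]; ring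
        rw [h4]
        exact hm
      by_cases hdvd : p ∣ n
      · exact key_case_dvd Γ n p hn hdvd hΔ hstep
      · exact key_case_coprime hn hpp hdvd hΔ hstep

section width

variable {Γ : Subgroup SL(2, ℤ)} {g : SL(2, ℤ)}

lemma P_sub {a b : ℕ} (hb : b ≤ a)
    (hA : g * T ^ a * g⁻¹ ∈ Γ ∨ -(g * T ^ a * g⁻¹) ∈ Γ)
    (hB : g * T ^ b * g⁻¹ ∈ Γ ∨ -(g * T ^ b * g⁻¹) ∈ Γ) :
    g * T ^ (a - b) * g⁻¹ ∈ Γ ∨ -(g * T ^ (a - b) * g⁻¹) ∈ Γ := by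
  have h1 : T ^ (a - b) * T ^ b = T ^ a := by rw [← pow_add, Nat.sub_add_cancel hb]
  have hpow : (g * T ^ a * g⁻¹) * (g * T ^ b * g⁻¹)⁻¹ = g * T ^ (a - b) * g⁻¹ := by
    have h2 : (g * T ^ a * g⁻¹) * (g * T ^ b * g⁻¹)⁻¹ = g * (T ^ a * (T ^ b)⁻¹) * g⁻¹ := by
      group
    rw [h2, ← h1, mul_inv_cancel_right]
  have hinvneg : ∀ x : SL(2, ℤ), (-x)⁻¹ = -(x⁻¹) := fun x => by
    apply inv_eq_of_mul_eq_one_right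
    rw [neg_mul_neg, mul_inv_cancel]
  rcases hA with hA | hA <;> rcases hB with hB | hB
  · left; rw [← hpow]; exact mul_mem hA (inv_mem hB)
  · right
    have h3 := mul_mem hA (inv_mem hB)
    rwa [hinvneg, mul_neg, hpow] at h3
  · right
    have h3 := mul_mem hA (inv_mem hB)
    rwa [neg_mul, hpow] at h3
  · left
    have h3 := mul_mem hA (inv_mem hB)
    rwa [hinvneg, mul_neg, neg_mul, neg_neg, hpow] at h3

lemma width_dvd (hpos : 0 < cuspWidth Γ g) : ∀ m, 0 < m →
    (g * T ^ m * g⁻¹ ∈ Γ ∨ -(g * T ^ m * g⁻¹) ∈ Γ) → cuspWidth Γ g ∣ m := by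
  intro m
  induction m using Nat.strong_induction_on with
  | _ m ih =>
    intro hm hP
    have hmem : m ∈ {n : ℕ | 0 < n ∧ (g * T ^ n * g⁻¹ ∈ Γ ∨ -(g * T ^ n * g⁻¹) ∈ Γ)} := ⟨hm, hP⟩
    have hle : cuspWidth Γ g ≤ m := Nat.sInf_le hmem
    have hwmem : cuspWidth Γ g ∈
        {n : ℕ | 0 < n ∧ (g * T ^ n * g⁻¹ ∈ Γ ∨ -(g * T ^ n * g⁻¹) ∈ Γ)} :=
      Nat.sInf_mem ⟨m, hmem⟩
    rcases Nat.eq_zero_or_pos (m - cuspWidth Γ g) with h0 | hpos2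
    · have h5 : m = cuspWidth Γ g := by omega
      exact h5 ▸ dvd_refl _
    · have hP2 := P_sub hle hP hwmem.2
      have h6 := ih (m - cuspWidth Γ g) (by omega) hpos2 hP2
      have h7 : m = (m - cuspWidth Γ g) + cuspWidth Γ g := by omega
      rw [h7]
      exact dvd_add h6 (dvd_refl _)

lemma width_multiple (hpos : 0 < cuspWidth Γ g) {N : ℕ} (h : cuspWidth Γ g ∣ N) :
    g * T ^ N * g⁻¹ ∈ Γ ∨ -(g * T ^ N * g⁻¹) ∈ Γ := by
  have hne : {n : ℕ | 0 < n ∧ (g * T ^ n * g⁻¹ ∈ Γ ∨ -(g * T ^ n * g⁻¹) ∈ Γ)}.Nonempty := by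
    by_contra h'
    rw [Set.not_nonempty_iff_eq_empty] at h'
    have h8 : cuspWidth Γ g = 0 := by rw [cuspWidth, h', Nat.sInf_empty]
    omega
  have hwmem : cuspWidth Γ g ∈
      {n : ℕ | 0 < n ∧ (g * T ^ n * g⁻¹ ∈ Γ ∨ -(g * T ^ n * g⁻¹) ∈ Γ)} := Nat.sInf_mem hne
  obtain ⟨k, hk⟩ := h
  have hconj : g * T ^ N * g⁻¹ = (g * T ^ (cuspWidth Γ g) * g⁻¹) ^ k := by
    rw [_root_.conj_pow, ← pow_mul, ← hk]
  rcases hwmem.2 with hu | hu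
  · left; rw [hconj]; exact pow_mem hu k
  · have h9 : (-(g * T ^ cuspWidth Γ g * g⁻¹)) ^ k ∈ Γ := pow_mem hu k
    rcases Nat.even_or_odd k with he | ho
    · left; rwa [he.neg_pow, ← hconj] at h9
    · right; rwa [ho.neg_pow, ← hconj] at h9

end width

end Wohl

open Wohl

/-- A congruence subgroup of general level N contains Γ(2N); consequently its
level (the least M with Γ(M) ≤ Γ) is N or 2N. -/
theorem congruence_subgroup_level (Γ : Subgroup SL(2, ℤ)) (hfi : Γ.FiniteIndex)
    (hcong : IsCongruence Γ) (N : ℕ) (hN : IsGeneralLevel Γ N) :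
    Gamma (2 * N) ≤ Γ ∧
      (sInf {M : ℕ | 0 < M ∧ Gamma M ≤ Γ} = N ∨
        sInf {M : ℕ | 0 < M ∧ Gamma M ≤ Γ} = 2 * N) := by
  obtain ⟨hN0, hwdvd, hlcm⟩ := hN
  obtain ⟨M, hM0, hMle⟩ := hcong
  have hwidth_pos : ∀ g : SL(2, ℤ), 0 < cuspWidth Γ g := by
    intro g
    rcases Nat.eq_zero_or_pos (cuspWidth Γ g) with h0 | h
    · have := hwdvd g
      rw [h0] at this
      omega
    · exact h
  have hΔ : ∀ g : SL(2, ℤ), g * T ^ (2 * N) * g⁻¹ ∈ Γ := by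
    intro g
    have hP := width_multiple (hwidth_pos g) (hwdvd g)
    have hTT : (T : SL(2, ℤ)) ^ N * T ^ N = T ^ (2 * N) := by rw [← pow_add, two_mul]
    have hsq : (g * T ^ N * g⁻¹) * (g * T ^ N * g⁻¹) = g * T ^ (2 * N) * g⁻¹ := by
      rw [show (g * T ^ N * g⁻¹) * (g * T ^ N * g⁻¹) = g * (T ^ N * T ^ N) * g⁻¹ by group, hTT]
    rcases hP with h | h
    · rw [← hsq]; exact mul_mem h h
    · rw [← hsq, ← neg_mul_neg (g * T ^ N * g⁻¹) (g * T ^ N * g⁻¹)]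
      exact mul_mem h h
  have h2N0 : 0 < 2 * N := by omega
  have hmain : Gamma (2 * N) ≤ Γ := by
    apply wohlfahrt M hM0 (2 * N) h2N0 Γ hΔ
    exact le_trans (gamma_dvd_le (dvd_mul_left M (2 * N))) hMle
  refine ⟨hmain, ?_⟩
  have hmem2N : (2 * N) ∈ {M : ℕ | 0 < M ∧ Gamma M ≤ Γ} := ⟨h2N0, hmain⟩
  have hne : {M : ℕ | 0 < M ∧ Gamma M ≤ Γ}.Nonempty := ⟨_, hmem2N⟩
  have hLmem : sInf {M : ℕ | 0 < M ∧ Gamma M ≤ Γ} ∈ {M : ℕ | 0 < M ∧ Gamma M ≤ Γ} :=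
    Nat.sInf_mem hne
  set Lv := sInf {M : ℕ | 0 < M ∧ Gamma M ≤ Γ} with hLv
  have hLle : Lv ≤ 2 * N := Nat.sInf_le hmem2N
  obtain ⟨hL0, hLsub⟩ := hLmem
  have hPL : ∀ g : SL(2, ℤ), g * T ^ Lv * g⁻¹ ∈ Γ ∨ -(g * T ^ Lv * g⁻¹) ∈ Γ := by
    intro g
    left
    apply hLsub
    rw [gamma_iff]
    have h1 : MCong Lv ((T : SL(2, ℤ)) ^ Lv).1 1 := by
      have hTc : ((T : SL(2, ℤ)) ^ Lv).1 = !![1, (Lv : ℤ); 0, 1] := by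
        rw [← zpow_natCast T Lv]; exact coe_T_zpow Lv
      intro i j
      rw [hTc]
      fin_cases i <;> fin_cases j <;> simp [Matrix.one_apply]
    have h2 := MCong.mul (MCong.mul (MCong.refl Lv g.1) h1) (MCong.refl Lv (g⁻¹).1)
    have h3 : g.1 * (1 : M2) * (g⁻¹).1 = 1 := by
      rw [mul_one, ← Matrix.SpecialLinearGroup.coe_mul, mul_inv_cancel, Matrix.SpecialLinearGroup.coe_one]
    rw [h3] at h2
    rwa [← Matrix.SpecialLinearGroup.coe_mul, ← Matrix.SpecialLinearGroup.coe_mul] at h2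
  have hNL : N ∣ Lv := hlcm Lv (fun g => width_dvd (hwidth_pos g) Lv hL0 (hPL g))
  obtain ⟨k, hk⟩ := hNL
  have hk1 : 1 ≤ k := by
    rcases Nat.eq_zero_or_pos k with h | h
    · rw [h, mul_zero] at hk; omega
    · exact h
  have hk2 : k ≤ 2 := by
    have h4 : N * k ≤ N * 2 := by rw [← hk]; omega
    exact Nat.le_of_mul_le_mul_left h4 hN0
  have hk12 : k = 1 ∨ k = 2 := by omega
  rcases hk12 with h | h
  · left; rw [hk, h, mul_one]
  · right; rw [hk, h, mul_comm]
end

section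
/- Let N > 1 and suppose Γ̄(N) ≤ Γ̄ ≤ Γ̄₀(N) in PSL₂(ℤ). Then any congruence lift of Γ̄ to SL₂(ℤ) has level N or 2N (i.e., contains Γ(2N), and its least principal congruence subgroup has level N or 2N). -/
open Matrix CongruenceSubgroup
open scoped MatrixGroups

instance : (Subgroup.zpowers (-1 : SL(2, ℤ))).Normal where
  conj_mem := by
    intro x hx g
    obtain ⟨k, rfl⟩ := hx
    have h : g * (-1 : SL(2, ℤ)) ^ k * g⁻¹ = (-1 : SL(2, ℤ)) ^ k := by
      rw [((Commute.neg_one_left g).zpow_left k).symm.eq, mul_inv_cancel_right]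
    rw [h]
    exact Subgroup.zpow_mem _ (Subgroup.mem_zpowers _) k

/-- PSL₂(ℤ) = SL₂(ℤ)/{±I}. -/
abbrev PSL2Z := SL(2, ℤ) ⧸ Subgroup.zpowers (-1 : SL(2, ℤ))

/-- The canonical projection SL₂(ℤ) → PSL₂(ℤ). -/
def proj : SL(2, ℤ) →* PSL2Z := QuotientGroup.mk' _

/-! ### Auxiliary infrastructure -/

namespace CLL

/-- reduction mod n homomorphism -/
def red (n : ℕ) : SL(2, ℤ) →* SL(2, ZMod n) :=
  Matrix.SpecialLinearGroup.map (Int.castRingHom (ZMod n))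

lemma Gamma_eq_ker (n : ℕ) : Gamma n = (red n).ker := rfl

/-- lower-triangular elementary matrix over a commutative ring -/
def E21 {R : Type*} [CommRing R] (x : R) : SL(2, R) :=
  ⟨!![1, 0; x, 1], by simp [Matrix.det_fin_two_of]⟩

/-- upper-triangular elementary matrix -/
def E12 {R : Type*} [CommRing R] (x : R) : SL(2, R) :=
  ⟨!![1, x; 0, 1], by simp [Matrix.det_fin_two_of]⟩

lemma E21_mul {R : Type*} [CommRing R] (x y : R) : E21 x * E21 y = E21 (x + y) := by
  apply Subtype.ext
  rw [Matrix.SpecialLinearGroup.coe_mul]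
  simp only [E21, Matrix.SpecialLinearGroup.coe_mul, Matrix.mul_fin_two]
  norm_num [add_comm]

lemma E12_mul {R : Type*} [CommRing R] (x y : R) : E12 x * E12 y = E12 (x + y) := by
  apply Subtype.ext
  rw [Matrix.SpecialLinearGroup.coe_mul]
  simp only [E12, Matrix.SpecialLinearGroup.coe_mul, Matrix.mul_fin_two]
  norm_num [add_comm]

lemma E21_inv {R : Type*} [CommRing R] (x : R) : (E21 x)⁻¹ = E21 (-x) := by
  rw [inv_eq_iff_mul_eq_one, E21_mul, add_neg_cancel]
  apply Subtype.ext
  simp [E21, Matrix.SpecialLinearGroup.coe_one, ← Matrix.one_fin_two]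

lemma E12_inv {R : Type*} [CommRing R] (x : R) : (E12 x)⁻¹ = E12 (-x) := by
  rw [inv_eq_iff_mul_eq_one, E12_mul, add_neg_cancel]
  apply Subtype.ext
  simp [E12, Matrix.SpecialLinearGroup.coe_one, ← Matrix.one_fin_two]

lemma E21_mem_Gamma (n : ℕ) (m : ℤ) (h : (n : ℤ) ∣ m) : E21 m ∈ Gamma n := by
  rw [Gamma_mem]
  refine ⟨?_, ?_, ?_, ?_⟩ <;>
    simp [E21, ZMod.intCast_zmod_eq_zero_iff_dvd, h]

lemma E12_mem_Gamma (n : ℕ) (m : ℤ) (h : (n : ℤ) ∣ m) : E12 m ∈ Gamma n := by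
  rw [Gamma_mem]
  refine ⟨?_, ?_, ?_, ?_⟩ <;>
    simp [E12, ZMod.intCast_zmod_eq_zero_iff_dvd, h]

lemma red_E21 (n : ℕ) (m : ℤ) : red n (E21 m) = E21 ((m : ZMod n)) := by
  apply Subtype.ext
  ext i j
  fin_cases i <;> fin_cases j <;>
    (simp only [red, Matrix.SpecialLinearGroup.map_apply_coe, RingHom.mapMatrix_apply, Matrix.map_apply]; simp [E21])

lemma red_E12 (n : ℕ) (m : ℤ) : red n (E12 m) = E12 ((m : ZMod n)) := by
  apply Subtype.ext
  ext i j
  fin_cases i <;> fin_cases j <;>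
    (simp only [red, Matrix.SpecialLinearGroup.map_apply_coe, RingHom.mapMatrix_apply, Matrix.map_apply]; simp [E12])

/-- diagonal SL₂ element attached to a unit -/
def Dg {R : Type*} [CommRing R] (w : Rˣ) : SL(2, R) :=
  ⟨!![(w : R), 0; 0, ((w⁻¹ : Rˣ) : R)], by
    simp [Matrix.det_fin_two_of]⟩

lemma Dg_mul {R : Type*} [CommRing R] (w v : Rˣ) : Dg (w * v) = Dg w * Dg v := by
  apply Subtype.ext
  rw [Matrix.SpecialLinearGroup.coe_mul]
  simp only [Dg, Matrix.SpecialLinearGroup.coe_mul, Matrix.mul_fin_two, _root_.mul_inv_rev]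
  norm_num [mul_comm]

lemma Gamma_anti {m n : ℕ} (h : m ∣ n) : Gamma n ≤ Gamma m := by
  intro g hg
  rw [Gamma_mem] at hg ⊢
  have hc : ∀ x : ℤ, (x : ZMod n) = 1 → (x : ZMod m) = 1 := by
    intro x hx
    have := congrArg (ZMod.castHom h (ZMod m)) hx
    rwa [map_intCast, _root_.map_one] at this
  have hc0 : ∀ x : ℤ, (x : ZMod n) = 0 → (x : ZMod m) = 0 := by
    intro x hx
    have := congrArg (ZMod.castHom h (ZMod m)) hx
    rwa [map_intCast, _root_.map_zero] at this
  exact ⟨hc _ hg.1, hc0 _ hg.2.1, hc0 _ hg.2.2.1, hc _ hg.2.2.2⟩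

/-- integer "stable range" lemma -/
lemma int_stable_range (x y : ℤ) (L : ℕ) (hL0 : L ≠ 0) (h : IsCoprime x y) :
    ∃ t : ℤ, IsCoprime (x + t * y) (L : ℤ) := by
  classical
  set T : ℕ := ∏ p ∈ (L.primeFactors.filter (fun p : ℕ => ¬ ((p : ℤ) ∣ x))), p with hT
  refine ⟨(T : ℤ), ?_⟩
  rw [Int.isCoprime_iff_gcd_eq_one]
  by_contra hg
  obtain ⟨p, hp, hpd⟩ := Nat.exists_prime_and_dvd hg
  have hpz : (p : ℤ) ∣ (Int.gcd (x + T * y) L : ℤ) := Int.natCast_dvd_natCast.mpr hpd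
  have hps : (p : ℤ) ∣ x + T * y := hpz.trans (Int.gcd_dvd_left _ _)
  have hpL : p ∣ L := Int.natCast_dvd_natCast.mp (hpz.trans (Int.gcd_dvd_right _ _))
  by_cases hx : (p : ℤ) ∣ x
  · have hpy : ¬ (p : ℤ) ∣ y := by
      intro hy
      have h2 : 2 ≤ p := hp.two_le
      have := h.isUnit_of_dvd' hx hy
      rw [Int.isUnit_iff] at this
      rcases this with h' | h' <;> omega
    have hpT : ¬ (p : ℤ) ∣ (T : ℤ) := by
      rw [Int.natCast_dvd_natCast]
      intro hdT
      obtain ⟨q, hq, hpq⟩ := hp.prime.exists_mem_finset_dvd hdT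
      have : p = q := (Nat.prime_dvd_prime_iff_eq hp
        (Nat.prime_of_mem_primeFactors (Finset.mem_filter.mp hq).1)).mp hpq
      subst this
      exact (Finset.mem_filter.mp hq).2 hx
    have hdm : (p : ℤ) ∣ (T : ℤ) * y := (dvd_add_right hx).mp hps
    rcases (Nat.prime_iff_prime_int.mp hp).dvd_mul.mp hdm with h' | h'
    · exact hpT h'
    · exact hpy h'
  · have hpT : (p : ℤ) ∣ (T : ℤ) := by
      rw [Int.natCast_dvd_natCast, hT]
      exact Finset.dvd_prod_of_mem _ (Finset.mem_filter.mpr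
        ⟨Nat.mem_primeFactors.mpr ⟨hp, hpL, hL0⟩, hx⟩)
    exact hx ((dvd_add_right (hpT.mul_right y)).mp (by rwa [add_comm (x)] at hps))

lemma DB_facts (N L : ℕ) (hN : 0 < N) (hL : L ≠ 0) :
    ∃ D B : ℕ, L = D * B ∧ D ∣ N ^ L ∧ Nat.Coprime D B ∧ Nat.Coprime B N ∧ B ≠ 0 := by
  classical
  set D := Nat.gcd L (N ^ L) with hD
  have hNL0 : N ^ L ≠ 0 := pow_ne_zero _ (by omega)
  have hDL : D ∣ L := Nat.gcd_dvd_left _ _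
  have hDN : D ∣ N ^ L := Nat.gcd_dvd_right _ _
  set B := L / D with hB
  have hLDB : L = D * B := (Nat.mul_div_cancel' hDL).symm
  have hB0 : B ≠ 0 := by
    intro h0
    rw [h0, mul_zero] at hLDB
    exact hL hLDB
  have key : ∀ p : ℕ, p.Prime → p ∣ N → ¬ p ∣ B := by
    intro p hp hpN hpB
    have hfD : D.factorization p = L.factorization p := by
      rw [hD, Nat.factorization_gcd hL hNL0]
      simp only [Finsupp.inf_apply, Nat.factorization_pow, Finsupp.smul_apply, smul_eq_mul]
      refine min_eq_left ?_
      have h1 : 1 ≤ N.factorization p :=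
        hp.factorization_pos_of_dvd (by omega) hpN
      have h2 : L.factorization p ≤ L := by
        have hdvd : p ^ (L.factorization p) ∣ L := Nat.ordProj_dvd _ _
        have hle : p ^ (L.factorization p) ≤ L := Nat.le_of_dvd (Nat.pos_of_ne_zero hL) hdvd
        calc L.factorization p ≤ 2 ^ (L.factorization p) := Nat.le_of_lt Nat.lt_two_pow_self
        _ ≤ p ^ (L.factorization p) := Nat.pow_le_pow_left hp.two_le _
        _ ≤ L := hle
      calc L.factorization p ≤ L := h2
      _ = L * 1 := (mul_one L).symm
      _ ≤ L * N.factorization p := Nat.mul_le_mul_left L h1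
    have hfB : B.factorization p = 0 := by
      rw [hB, Nat.factorization_div hDL]
      simp [hfD]
    have := hp.factorization_pos_of_dvd hB0 hpB
    omega
  have hcop1 : Nat.Coprime D B := by
    rw [Nat.coprime_iff_gcd_eq_one]
    by_contra hg
    obtain ⟨p, hp, hpd⟩ := Nat.exists_prime_and_dvd hg
    exact key p hp (hp.dvd_of_dvd_pow ((hpd.trans (Nat.gcd_dvd_left _ _)).trans hDN))
      (hpd.trans (Nat.gcd_dvd_right _ _))
  have hcop2 : Nat.Coprime B N := by
    rw [Nat.coprime_iff_gcd_eq_one]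
    by_contra hg
    obtain ⟨p, hp, hpd⟩ := Nat.exists_prime_and_dvd hg
    exact key p hp (hpd.trans (Nat.gcd_dvd_right _ _)) (hpd.trans (Nat.gcd_dvd_left _ _))
  exact ⟨D, B, hLDB, hDN, hcop1, hcop2, hB0⟩

lemma crt_bij (L D B : ℕ) (hL0 : L ≠ 0) (h : L = D * B) (hcop : Nat.Coprime D B) :
    Function.Bijective (fun x : ZMod L =>
      ((ZMod.castHom (show D ∣ L by rw [h]; exact dvd_mul_right _ _) (ZMod D) x,
        ZMod.castHom (show B ∣ L by rw [h]; exact dvd_mul_left _ _) (ZMod B) x) :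
        ZMod D × ZMod B)) := by
  haveI : NeZero L := ⟨hL0⟩
  have hD0 : D ≠ 0 := by rintro rfl; simp at h; omega
  have hB0 : B ≠ 0 := by rintro rfl; simp at h; omega
  haveI : NeZero D := ⟨hD0⟩
  haveI : NeZero B := ⟨hB0⟩
  rw [Fintype.bijective_iff_injective_and_card]
  constructor
  · intro x y hxy
    simp only [Prod.mk.injEq] at hxy
    have hx : x = ((x.val : ℕ) : ZMod L) := by rw [ZMod.natCast_val, ZMod.cast_id]
    have hy : y = ((y.val : ℕ) : ZMod L) := by rw [ZMod.natCast_val, ZMod.cast_id]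
    have h1 : ((x.val : ℕ) : ZMod D) = ((y.val : ℕ) : ZMod D) := by
      have := hxy.1
      rwa [hx, hy, map_natCast, map_natCast] at this
    have h2 : ((x.val : ℕ) : ZMod B) = ((y.val : ℕ) : ZMod B) := by
      have := hxy.2
      rwa [hx, hy, map_natCast, map_natCast] at this
    rw [ZMod.natCast_eq_natCast_iff] at h1 h2
    rw [hx, hy, ZMod.natCast_eq_natCast_iff]
    have : x.val ≡ y.val [MOD D * B] := (Nat.modEq_and_modEq_iff_modEq_mul hcop).mp ⟨h1, h2⟩
    rwa [← h] at this
  · simp [ZMod.card, h]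

lemma crt_exists (L D B : ℕ) (hL0 : L ≠ 0) (h : L = D * B) (hcop : Nat.Coprime D B)
    (u : ZMod D) (v : ZMod B) :
    ∃ x : ZMod L,
      ZMod.castHom (show D ∣ L by rw [h]; exact dvd_mul_right _ _) (ZMod D) x = u ∧
      ZMod.castHom (show B ∣ L by rw [h]; exact dvd_mul_left _ _) (ZMod B) x = v := by
  obtain ⟨x, hx⟩ := (crt_bij L D B hL0 h hcop).2 (u, v)
  exact ⟨x, by simpa [Prod.ext_iff] using hx⟩

lemma crt_inj (L D B : ℕ) (hL0 : L ≠ 0) (h : L = D * B) (hcop : Nat.Coprime D B)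
    (x y : ZMod L)
    (h1 : ZMod.castHom (show D ∣ L by rw [h]; exact dvd_mul_right _ _) (ZMod D) x =
          ZMod.castHom (show D ∣ L by rw [h]; exact dvd_mul_right _ _) (ZMod D) y)
    (h2 : ZMod.castHom (show B ∣ L by rw [h]; exact dvd_mul_left _ _) (ZMod B) x =
          ZMod.castHom (show B ∣ L by rw [h]; exact dvd_mul_left _ _) (ZMod B) y) :
    x = y :=
  (crt_bij L D B hL0 h hcop).1 (by simp [Prod.ext_iff, h1, h2])

lemma isUnit_intCast_of_isCoprime {x : ℤ} {L : ℕ} (h : IsCoprime x (L : ℤ)) :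
    IsUnit ((x : ℤ) : ZMod L) := by
  obtain ⟨a, b, hab⟩ := h
  refine IsUnit.of_mul_eq_one ((a : ℤ) : ZMod L) ?_
  have := congrArg (fun z : ℤ => ((z : ZMod L))) hab
  push_cast at this
  rw [ZMod.natCast_self] at this
  simpa [mul_comm] using this

lemma isCoprime_of_isUnit_intCast {x : ℤ} {L : ℕ} (hL : L ≠ 0)
    (h : IsUnit ((x : ℤ) : ZMod L)) : IsCoprime x (L : ℤ) := by
  obtain ⟨u, hu⟩ := h
  have h1 : ((x : ℤ) : ZMod L) * ((u⁻¹ : (ZMod L)ˣ) : ZMod L) = 1 := by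
    rw [← hu]; exact u.mul_inv
  set v : ℤ := ((((u⁻¹ : (ZMod L)ˣ) : ZMod L)).val : ℤ)
  haveI : NeZero L := ⟨hL⟩
  have h2 : ((x * v - 1 : ℤ) : ZMod L) = 0 := by
    have hv : ((v : ℤ) : ZMod L) = ((u⁻¹ : (ZMod L)ˣ) : ZMod L) := by
      simp only [v, Int.cast_natCast, ZMod.natCast_val, ZMod.cast_id, ZMod.intCast_zmod_cast]
    rw [Int.cast_sub, Int.cast_mul, Int.cast_one, hv, h1, sub_self]
  rw [ZMod.intCast_zmod_eq_zero_iff_dvd] at h2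
  obtain ⟨k, hk⟩ := h2
  exact ⟨v, -k, by linarith⟩

/-- for a unit u mod B, u+1 is divisible by 2 -/
lemma exists_two_mul {B : ℕ} (u : ZMod B) (hu : IsUnit u) :
    ∃ v : ZMod B, 2 * v = u + 1 := by
  rcases Nat.even_or_odd B with hB | hB
  · -- B even, so u is odd
    rcases Nat.eq_zero_or_pos B with rfl | hB0
    · -- ZMod 0 = ℤ, u unit = ±1
      rcases Int.isUnit_iff.mp hu with h | h
      · exact ⟨1, by rw [h]; norm_num; exact one_add_one_eq_two.symm⟩
      · exact ⟨0, by rw [h]; norm_num; exact (neg_add_cancel 1).symm⟩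
    haveI : NeZero B := ⟨by omega⟩
    obtain ⟨w, rfl⟩ := hu
    have hcop : Nat.Coprime ((w : ZMod B)).val B := ZMod.val_coe_unit_coprime w
    have hodd : ¬ (2 ∣ ((w : ZMod B)).val) := by
      intro h2
      obtain ⟨b2, hb2⟩ := hB
      have : 2 ∣ Nat.gcd ((w : ZMod B)).val B := Nat.dvd_gcd h2 (by omega)
      rw [hcop] at this
      omega
    obtain ⟨m, hm⟩ : ∃ m, ((w : ZMod B)).val + 1 = 2 * m := by
      rcases Nat.even_or_odd ((w : ZMod B)).val with he | ho
      · exact absurd he.two_dvd hodd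
      · obtain ⟨m, hm⟩ := ho; exact ⟨m + 1, by omega⟩
    refine ⟨(m : ℕ), ?_⟩
    have := congrArg (fun z : ℕ => ((z : ZMod B))) hm
    push_cast at this
    rw [ZMod.natCast_val, ZMod.cast_id] at this
    rw [← this]
  · -- B odd: 2 is invertible
    have hcop : IsCoprime (2 : ℤ) (B : ℤ) := by
      rw [Int.isCoprime_iff_gcd_eq_one]
      have : Nat.gcd 2 B = 1 := Nat.coprime_two_left.mpr hB
      simpa [Int.gcd] using this
    obtain ⟨i2, hi2⟩ := isUnit_intCast_of_isCoprime hcop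
    refine ⟨((i2⁻¹ : (ZMod B)ˣ) : ZMod B) * (u + 1), ?_⟩
    have h2 : ((2 : ℤ) : ZMod B) * ((i2⁻¹ : (ZMod B)ˣ) : ZMod B) = 1 := by
      rw [← hi2]; exact i2.mul_inv
    push_cast at h2
    calc 2 * (((i2⁻¹ : (ZMod B)ˣ) : ZMod B) * (u + 1))
        = (2 * ((i2⁻¹ : (ZMod B)ˣ) : ZMod B)) * (u + 1) := by ring
      _ = u + 1 := by rw [h2, one_mul]

/-- N³ z is divisible by 2N mod D, when D ∣ N ^ e -/
lemma exists_Ncube {N D e : ℕ} (hD : D ∣ N ^ e) (z : ZMod D) :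
    ∃ y : ZMod D, (N : ZMod D)^3 * z = 2 * N * y := by
  rcases Nat.even_or_odd N with hNe | hNo
  · obtain ⟨n, hn⟩ := hNe
    refine ⟨(n : ZMod D) * N * z, ?_⟩
    have : (N : ZMod D) = 2 * n := by
      have : N = 2 * n := by omega
      exact_mod_cast congrArg (fun m : ℕ => ((m : ZMod D))) this
    rw [this]; ring
  · -- N odd hence D odd, 2 invertible mod D
    have hDodd : ¬ 2 ∣ D := by
      intro h2
      have hh : (2 : ℕ) ∣ N ^ e := h2.trans hD
      have h3 := (Nat.prime_two.dvd_of_dvd_pow hh)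
      rw [Nat.odd_iff] at hNo
      omega
    have hcop : IsCoprime (2 : ℤ) (D : ℤ) := by
      rw [Int.isCoprime_iff_gcd_eq_one]
      have : Nat.gcd 2 D = 1 := Nat.coprime_two_left.mpr (Nat.odd_iff.mpr (by omega))
      simpa [Int.gcd] using this
    obtain ⟨i2, hi2⟩ := isUnit_intCast_of_isCoprime hcop
    refine ⟨((i2⁻¹ : (ZMod D)ˣ) : ZMod D) * (N : ZMod D)^2 * z, ?_⟩
    have h2 : ((2 : ℤ) : ZMod D) * ((i2⁻¹ : (ZMod D)ˣ) : ZMod D) = 1 := by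
      rw [← hi2]; exact i2.mul_inv
    push_cast at h2
    calc (N : ZMod D)^3 * z = (2 * ((i2⁻¹ : (ZMod D)ˣ) : ZMod D)) * ((N:ZMod D)^3 * z) := by
          rw [h2, one_mul]
      _ = 2 * N * (((i2⁻¹ : (ZMod D)ˣ) : ZMod D) * (N : ZMod D)^2 * z) := by ring

lemma scalar_decomp (N L : ℕ) (hN : 0 < N) (hL0 : L ≠ 0) (T : ℤ)
    (hu : IsUnit ((1 + 2*N*T : ℤ) : ZMod L)) :
    ∃ (w iw s b c x y : ZMod L),
      w * iw = 1 ∧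
      w = 1 + N*s ∧
      ((1 + 2*N*T : ℤ) : ZMod L) = w*w*(1 + (N*b)*(N*c)) ∧
      (N*c)*(2 + (N*b)*(N*c)) = 2*N*x ∧
      (N*b)*(2 + (N*b)*(N*c)) = 2*N*y := by
  obtain ⟨D, B, hLDB, hDN, hcop1, hcop2, hB0⟩ := DB_facts N L hN hL0
  have hDdvd : D ∣ L := by rw [hLDB]; exact dvd_mul_right _ _
  have hBdvd : B ∣ L := by rw [hLDB]; exact dvd_mul_left _ _
  set φD := ZMod.castHom hDdvd (ZMod D) with hφD
  set φB := ZMod.castHom hBdvd (ZMod B) with hφB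
  -- D-side data
  set tD : ZMod D := ((T : ℤ) : ZMod D) with htD
  have hwcop : IsCoprime (1 + (N:ℤ)*T) (D : ℤ) := by
    have c1 : IsCoprime (1 + (N:ℤ)*T) ((N:ℤ)) := ⟨1, -T, by ring⟩
    have c2 : IsCoprime (1 + (N:ℤ)*T) ((N:ℤ)^L) := c1.pow_right
    exact c2.of_isCoprime_of_dvd_right (by exact_mod_cast hDN)
  set w0 : ZMod D := ((1 + (N:ℤ)*T : ℤ) : ZMod D) with hw0
  obtain ⟨wu, hwu⟩ := isUnit_intCast_of_isCoprime hwcop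
  set iwD : ZMod D := ((wu⁻¹ : (ZMod D)ˣ) : ZMod D) with hiwdef
  have hiwD : w0 * iwD = 1 := by rw [hw0, ← hwu]; exact wu.mul_inv
  have hw0c : w0 = 1 + (N : ZMod D) * tD := by rw [hw0, htD]; push_cast; ring
  set bD : ZMod D := -(tD*tD*iwD*iwD) with hbD
  obtain ⟨y3, hy3⟩ := exists_Ncube hDN (tD*tD*iwD*iwD)
  obtain ⟨y4, hy4⟩ := exists_Ncube hDN (tD*tD*tD*tD*iwD*iwD*iwD*iwD)
  have huD : ((1 + 2*N*T : ℤ) : ZMod D) = 1 + 2*(N:ZMod D)*tD := by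
    rw [htD]; push_cast; ring
  -- B-side data
  set uB : ZMod B := ((1 + 2*N*T : ℤ) : ZMod B) with huB
  have huBunit : IsUnit uB := by
    have := hu.map φB
    rwa [map_intCast] at this
  have hNcop : IsCoprime ((N : ℕ) : ℤ) (B : ℤ) := by
    rw [Int.isCoprime_iff_gcd_eq_one]
    have : Nat.gcd N B = 1 := hcop2.symm
    simpa [Int.gcd] using this
  obtain ⟨νu, hνu⟩ := isUnit_intCast_of_isCoprime hNcop
  set ν : ZMod B := ((νu⁻¹ : (ZMod B)ˣ) : ZMod B) with hνdef
  have hν : (N : ZMod B) * ν = 1 := by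
    have : ((N:ℤ) : ZMod B) * ν = 1 := by rw [← hνu]; exact νu.mul_inv
    rwa [Int.cast_natCast] at this
  obtain ⟨v2, hv2⟩ := exists_two_mul uB huBunit
  -- global picks
  obtain ⟨w, hwD, hwB⟩ := crt_exists L D B hL0 hLDB hcop1 w0 1
  obtain ⟨iw, hiwDc, hiwBc⟩ := crt_exists L D B hL0 hLDB hcop1 iwD 1
  obtain ⟨s, hsD, hsB⟩ := crt_exists L D B hL0 hLDB hcop1 tD 0
  obtain ⟨b, hbDc, hbBc⟩ := crt_exists L D B hL0 hLDB hcop1 bD (ν*(uB - 1))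
  obtain ⟨c, hcD, hcB⟩ := crt_exists L D B hL0 hLDB hcop1 1 ν
  obtain ⟨x, hxD, hxB⟩ := crt_exists L D B hL0 hLDB hcop1 (1 - y3) (ν*v2)
  obtain ⟨y, hyD, hyB⟩ := crt_exists L D B hL0 hLDB hcop1 (-(tD*tD*iwD*iwD) + y4) (ν*v2*(uB-1))
  refine ⟨w, iw, s, b, c, x, y, ?_, ?_, ?_, ?_, ?_⟩
  · exact crt_inj L D B hL0 hLDB hcop1 _ _
      (by simp only [_root_.map_mul, _root_.map_one, hwD, hiwDc]; exact hiwD)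
      (by simp only [_root_.map_mul, _root_.map_one, hwB, hiwBc]; exact one_mul 1)
  · exact crt_inj L D B hL0 hLDB hcop1 _ _
      (by simp only [_root_.map_mul, _root_.map_add, _root_.map_one, _root_.map_natCast, hwD, hsD]; exact hw0c)
      (by simp only [_root_.map_mul, _root_.map_add, _root_.map_one, _root_.map_natCast, hwB, hsB]; ring)
  · refine crt_inj L D B hL0 hLDB hcop1 _ _ ?_ ?_
    · simp only [_root_.map_mul, _root_.map_add, _root_.map_one, _root_.map_natCast, _root_.map_intCast, hwD, hbDc, hcD]
      rw [huD, hbD]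
      linear_combination ((N:ZMod D)^2*tD^2*(w0*iwD + 1))*hiwD - (w0 + 1 + (N:ZMod D)*tD)*hw0c
    · simp only [_root_.map_mul, _root_.map_add, _root_.map_one, _root_.map_natCast, _root_.map_intCast, hwB, hbBc, hcB]
      rw [← huB]
      linear_combination (-(uB-1)*((N:ZMod B)*ν+1))*hν
  · refine crt_inj L D B hL0 hLDB hcop1 _ _ ?_ ?_
    · simp only [_root_.map_mul, _root_.map_add, _root_.map_ofNat, _root_.map_natCast, hbDc, hcD, hxD]
      rw [hbD]
      linear_combination -hy3
    · simp only [_root_.map_mul, _root_.map_add, _root_.map_ofNat, _root_.map_natCast, hbBc, hcB, hxB]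
      linear_combination ((uB-1)*((N:ZMod B)*ν)*((N:ZMod B)*ν+1))*hν + (-((N:ZMod B)*ν))*hv2
  · refine crt_inj L D B hL0 hLDB hcop1 _ _ ?_ ?_
    · simp only [_root_.map_mul, _root_.map_add, _root_.map_ofNat, _root_.map_natCast, hbDc, hcD, hyD]
      rw [hbD]
      linear_combination hy4
    · simp only [_root_.map_mul, _root_.map_add, _root_.map_ofNat, _root_.map_natCast, hbBc, hcB, hyB]
      linear_combination (-((N:ZMod B)*ν)*(uB-1))*hv2 + ((uB-1)^2*((N:ZMod B)*ν)*((N:ZMod B)*ν+1))*hν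

lemma mat2_ext {R : Type*} (a b c d a' b' c' d' : R) (h1 : a = a') (h2 : b = b')
    (h3 : c = c') (h4 : d = d') : !![a, b; c, d] = !![a', b'; c', d'] := by
  subst h1 h2 h3 h4; rfl

lemma map_fin_two {R S : Type*} (f : R → S) (a b c d : R) :
    (!![a, b; c, d]).map f = !![f a, f b; f c, f d] := by
  ext i j
  fin_cases i <;> fin_cases j <;> simp [Matrix.map_apply]

lemma matrix_decomp {R : Type*} [CommRing R] (a β γ d ia w iw P Q iu : R)
    (hdet : a * d - β * γ = 1) (hia : a * ia = 1) (hwiw : w * iw = 1)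
    (ha : a = w * w * (1 + P * Q)) (hiu : (1 + P * Q) * iu = 1) :
    !![a, β; γ, d] =
      !![1,0;γ*ia,1] * !![w,0;0,iw] * !![w,0;0,iw] * !![1,0;-(Q*(2+P*Q)*iu),1] *
      !![1,P;Q,1+P*Q] * !![1,P;Q,1+P*Q] * !![1,-(P*(2+P*Q)*iu);0,1] * !![1,ia*β;0,1] := by
  have step1 : !![(1:R),P;Q,1+P*Q] * !![1,P;Q,1+P*Q] =
      !![1+P*Q, P*(2+P*Q); Q*(2+P*Q), P*Q + (1+P*Q)*(1+P*Q)] := by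
    rw [Matrix.mul_fin_two]
    exact mat2_ext _ _ _ _ _ _ _ _ (by ring) (by ring) (by ring) (by ring)
  have step2 : !![(1:R),0;-(Q*(2+P*Q)*iu),1] *
      !![1+P*Q, P*(2+P*Q); Q*(2+P*Q), P*Q + (1+P*Q)*(1+P*Q)] *
      !![1,-(P*(2+P*Q)*iu);0,1] = !![1+P*Q, 0; 0, iu] := by
    rw [Matrix.mul_fin_two, Matrix.mul_fin_two]
    refine mat2_ext _ _ _ _ _ _ _ _ (by ring) ?_ ?_ ?_
    · linear_combination (-(P*(2+P*Q)))*hiu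
    · linear_combination (-(Q*(2+P*Q)))*hiu
    · linear_combination ((P*Q*(2+P*Q)^2*iu) - (P*Q + (1+P*Q)^2))*hiu
  have step3 : !![w,0;0,iw] * !![w,0;0,iw] * !![1+P*Q,0;0,iu] =
      !![a, 0; 0, iw*iw*iu] := by
    rw [Matrix.mul_fin_two, Matrix.mul_fin_two]
    exact mat2_ext _ _ _ _ _ _ _ _ (by rw [ha]; ring) (by ring) (by ring) (by ring)
  have hia_eq : ia = iw*iw*iu := by
    have h5 : a * (iw*iw*iu) = 1 := by
      rw [ha]
      linear_combination ((1+P*Q)*iu*(w*iw+1))*hwiw + hiu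
    linear_combination (iw*iw*iu)*hia - ia*h5
  have step4 : !![(1:R),0;γ*ia,1] * !![a,0;0,ia] * !![1,ia*β;0,1] = !![a, β; γ, d] := by
    rw [Matrix.mul_fin_two, Matrix.mul_fin_two]
    refine mat2_ext _ _ _ _ _ _ _ _ (by ring) ?_ ?_ ?_
    · linear_combination β*hia
    · linear_combination γ*hia
    · linear_combination (γ*ia*β + d)*hia - ia*hdet
  calc !![a, β; γ, d] = !![(1:R),0;γ*ia,1] * !![a,0;0,ia] * !![1,ia*β;0,1] := step4.symm
    _ = !![(1:R),0;γ*ia,1] * (!![w,0;0,iw] * !![w,0;0,iw] * !![1+P*Q,0;0,iu]) *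
        !![1,ia*β;0,1] := by rw [step3, hia_eq]
    _ = !![(1:R),0;γ*ia,1] * (!![w,0;0,iw] * !![w,0;0,iw] *
          (!![(1:R),0;-(Q*(2+P*Q)*iu),1] *
           (!![(1:R),P;Q,1+P*Q] * !![1,P;Q,1+P*Q]) *
           !![1,-(P*(2+P*Q)*iu);0,1])) * !![1,ia*β;0,1] := by rw [step1, step2]
    _ = _ := by simp only [Matrix.mul_assoc]

lemma diag_lift (Nn L : ℕ) (hNL : Nn ∣ L) (hL0 : L ≠ 0) (w iw s : ZMod L)
    (hwi : w * iw = 1) (hws : w = 1 + Nn * s) :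
    ∃ W : SL(2, ℤ), W ∈ Gamma Nn ∧
      ((red L W : SL(2, ZMod L)) : Matrix (Fin 2) (Fin 2) (ZMod L)) = !![w, 0; 0, iw] := by
  haveI : NeZero L := ⟨hL0⟩
  set α : ℤ := 1 + (Nn : ℤ) * ((s.val : ℕ) : ℤ) with hα
  have hαw : ((α : ℤ) : ZMod L) = w := by
    rw [hα, hws]
    push_cast
    rw [ZMod.natCast_val, ZMod.cast_id]
  have hc1 : IsCoprime α ((Nn : ℕ) : ℤ) := ⟨1, -((s.val : ℕ) : ℤ), by rw [hα]; ring⟩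
  have hc2 : IsCoprime α (L : ℤ) := by
    apply isCoprime_of_isUnit_intCast hL0
    rw [hαw]
    exact IsUnit.of_mul_eq_one _ hwi
  have hc : IsCoprime α ((Nn : ℤ) * ((L : ℤ) * (L : ℤ))) := hc1.mul_right (hc2.mul_right hc2)
  obtain ⟨p, q, hpq⟩ := hc
  set δ : ℤ := p with hδ
  set e : ℤ := -q with he
  have hdet : α * δ - ((Nn : ℤ) * L * e) * L = 1 := by
    rw [hδ, he]
    linear_combination hpq
  refine ⟨⟨!![α, (Nn : ℤ) * L * e; (L : ℤ), δ], by
    rw [Matrix.det_fin_two_of]; linear_combination hdet⟩, ?_, ?_⟩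
  · refine Gamma_mem.mpr ?_
    refine ⟨?_, ?_, ?_, ?_⟩
    · show ((α : ℤ) : ZMod Nn) = 1
      rw [hα]; push_cast; rw [ZMod.natCast_self]; ring
    · show (((Nn : ℤ) * L * e : ℤ) : ZMod Nn) = 0
      push_cast; rw [ZMod.natCast_self]; ring
    · show (((L : ℕ) : ℤ) : ZMod Nn) = 0
      rw [ZMod.intCast_zmod_eq_zero_iff_dvd]
      exact_mod_cast hNL
    · show ((δ : ℤ) : ZMod Nn) = 1
      have h1 : ((α * δ : ℤ) : ZMod Nn) = 1 := by
        have : (α * δ : ℤ) = 1 + (Nn : ℤ) * (L * e * L) := by linear_combination hdet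
        rw [this]; push_cast; rw [ZMod.natCast_self]; ring
      have h2 : ((α : ℤ) : ZMod Nn) = 1 := by
        rw [hα]; push_cast; rw [ZMod.natCast_self]; ring
      rw [Int.cast_mul, h2, one_mul] at h1
      exact h1
  · have hδw : ((δ : ℤ) : ZMod L) * w = 1 := by
      have h1 : ((α * δ : ℤ) : ZMod L) = 1 := by
        have : (α * δ : ℤ) = 1 + (L : ℤ) * ((Nn : ℤ) * e * L) := by linear_combination hdet
        rw [this]; push_cast; rw [ZMod.natCast_self]; ring
      rw [Int.cast_mul, hαw] at h1
      linear_combination h1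
    have hδiw : ((δ : ℤ) : ZMod L) = iw := by
      have := hwi
      calc ((δ : ℤ) : ZMod L) = ((δ : ℤ) : ZMod L) * (w * iw) := by rw [hwi, mul_one]
        _ = (((δ : ℤ) : ZMod L) * w) * iw := by ring
        _ = iw := by rw [hδw, one_mul]
    show (Matrix.map _ _) = _
    rw [map_fin_two]
    refine mat2_ext _ _ _ _ _ _ _ _ hαw ?_ ?_ hδiw
    · show (((Nn : ℤ) * L * e : ℤ) : ZMod L) = 0
      push_cast; rw [ZMod.natCast_self]; ring
    · show (((L : ℕ) : ℤ) : ZMod L) = 0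
      push_cast; rw [ZMod.natCast_self]

lemma E21_zero {R : Type*} [CommRing R] : E21 (0 : R) = 1 := by
  apply Subtype.ext
  simp [E21, Matrix.SpecialLinearGroup.coe_one, ← Matrix.one_fin_two]

lemma E21_coe {R : Type*} [CommRing R] (x : R) :
    ((E21 x : SL(2,R)) : Matrix (Fin 2) (Fin 2) R) = !![1, 0; x, 1] := rfl

lemma E12_coe {R : Type*} [CommRing R] (x : R) :
    ((E12 x : SL(2,R)) : Matrix (Fin 2) (Fin 2) R) = !![1, x; 0, 1] := rfl

/-- the special matrix `[[1,b],[c,1+bc]]` -/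
def Bmat {R : Type*} [CommRing R] (b c : R) : SL(2, R) :=
  ⟨!![1, b; c, 1 + b*c], by rw [Matrix.det_fin_two_of]; ring⟩

lemma Bmat_coe {R : Type*} [CommRing R] (b c : R) :
    ((Bmat b c : SL(2,R)) : Matrix (Fin 2) (Fin 2) R) = !![1, b; c, 1 + b*c] := rfl

lemma Bmat_mem_Gamma (n : ℕ) (b c : ℤ) (hb : (n:ℤ) ∣ b) (hc : (n:ℤ) ∣ c) :
    Bmat b c ∈ Gamma n := by
  rw [Gamma_mem]
  have hbc : ((b*c : ℤ) : ZMod n) = 0 := by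
    rw [ZMod.intCast_zmod_eq_zero_iff_dvd]
    exact hb.mul_right c
  refine ⟨by simp [Bmat], ?_, ?_, ?_⟩
  · show ((b : ℤ) : ZMod n) = 0
    rw [ZMod.intCast_zmod_eq_zero_iff_dvd]; exact hb
  · show ((c : ℤ) : ZMod n) = 0
    rw [ZMod.intCast_zmod_eq_zero_iff_dvd]; exact hc
  · show ((1 + b*c : ℤ) : ZMod n) = 1
    push_cast
    push_cast at hbc
    rw [hbc]; ring

lemma red_Bmat (n : ℕ) (b c : ℤ) :
    red n (Bmat b c) = Bmat ((b : ZMod n)) ((c : ZMod n)) := by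
  apply Subtype.ext
  show (Matrix.map _ _) = _
  rw [Bmat_coe, map_fin_two, Bmat_coe]
  refine mat2_ext _ _ _ _ _ _ _ _ ?_ rfl rfl ?_
  · show ((1 : ℤ) : ZMod n) = 1
    exact Int.cast_one
  · show ((1 + b*c : ℤ) : ZMod n) = 1 + (b : ZMod n) * (c : ZMod n)
    push_cast; ring

lemma key (N M : ℕ) (hN : 0 < N) (hM : 0 < M) :
    Gamma (2*N) ≤ (Subgroup.closure {x : SL(2,ℤ) | ∃ y ∈ Gamma N, y * y = x}) ⊔ Gamma (2*N*M) := by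
  set L : ℕ := 2*N*M with hL
  have hL0 : L ≠ 0 := by positivity
  haveI : NeZero L := ⟨hL0⟩
  have hNL : N ∣ L := ⟨2*M, by rw [hL]; ring⟩
  set H : Subgroup SL(2,ℤ) :=
    (Subgroup.closure {x : SL(2,ℤ) | ∃ y ∈ Gamma N, y * y = x}) ⊔ Gamma L with hH
  have hsq : ∀ y ∈ Gamma N, y * y ∈ H := fun y hy =>
    le_sup_left (a := Subgroup.closure {x : SL(2,ℤ) | ∃ y ∈ Gamma N, y * y = x}) (Subgroup.subset_closure ⟨y, hy, rfl⟩)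
  have hE21H : ∀ m : ℤ, E21 (2*(N:ℤ)*m) ∈ H := by
    intro m
    have : E21 ((N:ℤ)*m) * E21 ((N:ℤ)*m) = E21 (2*(N:ℤ)*m) := by
      rw [E21_mul]; ring_nf
    rw [← this]
    exact hsq _ (E21_mem_Gamma N _ ⟨m, rfl⟩)
  have hE12H : ∀ m : ℤ, E12 (2*(N:ℤ)*m) ∈ H := by
    intro m
    have : E12 ((N:ℤ)*m) * E12 ((N:ℤ)*m) = E12 (2*(N:ℤ)*m) := by
      rw [E12_mul]; ring_nf
    rw [← this]
    exact hsq _ (E12_mem_Gamma N _ ⟨m, rfl⟩)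
  set K : Subgroup SL(2, ZMod L) := Subgroup.map (red L) H with hK
  have hEK21 : ∀ z : ZMod L, E21 (2*(N : ZMod L)*z) ∈ K := by
    intro z
    refine ⟨E21 (2*(N:ℤ)*((z.val : ℕ) : ℤ)), hE21H _, ?_⟩
    rw [red_E21]
    congr 1
    push_cast
    rw [ZMod.natCast_val, ZMod.cast_id]
  have hEK12 : ∀ z : ZMod L, E12 (2*(N : ZMod L)*z) ∈ K := by
    intro z
    refine ⟨E12 (2*(N:ℤ)*((z.val : ℕ) : ℤ)), hE12H _, ?_⟩
    rw [red_E12]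
    congr 1
    push_cast
    rw [ZMod.natCast_val, ZMod.cast_id]
  intro g hg
  rw [Gamma_mem] at hg
  obtain ⟨e1, e2, e3, e4⟩ := hg
  set A : ℤ := (g : Matrix (Fin 2) (Fin 2) ℤ) 0 0 with hA
  set Bq : ℤ := (g : Matrix (Fin 2) (Fin 2) ℤ) 0 1 with hBq
  set C : ℤ := (g : Matrix (Fin 2) (Fin 2) ℤ) 1 0 with hC
  set Dq : ℤ := (g : Matrix (Fin 2) (Fin 2) ℤ) 1 1 with hDq
  obtain ⟨k1, hk1⟩ : ((2*N : ℕ) : ℤ) ∣ A - 1 := by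
    rw [← ZMod.intCast_zmod_eq_zero_iff_dvd]
    push_cast
    rw [show ((A : ℤ) : ZMod (2*N)) = 1 from e1]
    ring
  obtain ⟨k2, hk2⟩ : ((2*N : ℕ) : ℤ) ∣ Bq := by
    rw [← ZMod.intCast_zmod_eq_zero_iff_dvd]
    exact e2
  obtain ⟨k3, hk3⟩ : ((2*N : ℕ) : ℤ) ∣ C := by
    rw [← ZMod.intCast_zmod_eq_zero_iff_dvd]
    exact e3
  have hdet : A * Dq - Bq * C = 1 := by
    have h := g.property
    rw [Matrix.det_fin_two] at h
    exact h
  -- find t₀ making the top-left entry coprime to L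
  have hcop1 : IsCoprime A ((2*N : ℕ) : ℤ) := ⟨1, -k1, by linarith⟩
  have hcop2 : IsCoprime A Bq := ⟨Dq, -C, by linarith [hdet]⟩
  obtain ⟨t₀, hcop⟩ := int_stable_range A (((2*N:ℕ) : ℤ) * Bq) L hL0 (hcop1.mul_right hcop2)
  set sInt : ℤ := 2*(N:ℤ)*t₀ with hsInt
  set g₁ : SL(2,ℤ) := g * E21 sInt with hg₁
  have hg₁coe : (g₁ : Matrix (Fin 2) (Fin 2) ℤ) =
      !![A + Bq*sInt, Bq; C + Dq*sInt, Dq] := by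
    rw [hg₁, Matrix.SpecialLinearGroup.coe_mul, E21_coe]
    nth_rewrite 1 [Matrix.eta_fin_two (g : Matrix (Fin 2) (Fin 2) ℤ)]
    rw [Matrix.mul_fin_two, ← hA, ← hBq, ← hC, ← hDq]
    exact mat2_ext _ _ _ _ _ _ _ _ (by ring) (by ring) (by ring) (by ring)
  set T : ℤ := k1 + Bq*t₀ with hT
  have ha₁ : A + Bq*sInt = 1 + 2*(N:ℤ)*T := by
    push_cast at hk1
    rw [hT, hsInt]
    linear_combination hk1
  have hu : IsUnit ((1 + 2*(N:ℕ)*T : ℤ) : ZMod L) := by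
    apply isUnit_intCast_of_isCoprime
    have : A + t₀ * (((2*N:ℕ):ℤ) * Bq) = 1 + 2*(N:ℕ)*T := by
      push_cast
      push_cast at ha₁
      linear_combination ha₁
    rwa [this] at hcop
  obtain ⟨w, iw, sv, b, c, x, y, h0, h1, h2, h3, h4⟩ := scalar_decomp N L hN hL0 T hu
  obtain ⟨W, hWΓ, hWcoe⟩ := diag_lift N L hNL hL0 w iw sv h0 h1
  -- the B matrix lift
  set b₀ : ℤ := ((b.val : ℕ) : ℤ) with hb₀
  set c₀ : ℤ := ((c.val : ℕ) : ℤ) with hc₀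
  have hb₀c : ((b₀ : ℤ) : ZMod L) = b := by
    rw [hb₀]; push_cast; rw [ZMod.natCast_val, ZMod.cast_id]
  have hc₀c : ((c₀ : ℤ) : ZMod L) = c := by
    rw [hc₀]; push_cast; rw [ZMod.natCast_val, ZMod.cast_id]
  set Bm : SL(2,ℤ) := Bmat ((N:ℤ)*b₀) ((N:ℤ)*c₀) with hBm
  have hBmΓ : Bm ∈ Gamma N := Bmat_mem_Gamma N _ _ ⟨b₀, rfl⟩ ⟨c₀, rfl⟩
  have heb : (((N:ℤ)*b₀ : ℤ) : ZMod L) = (N : ZMod L)*b := by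
    rw [Int.cast_mul, Int.cast_natCast, hb₀c]
  have hec : (((N:ℤ)*c₀ : ℤ) : ZMod L) = (N : ZMod L)*c := by
    rw [Int.cast_mul, Int.cast_natCast, hc₀c]
  have hBmcoe : ((red L Bm : SL(2, ZMod L)) : Matrix (Fin 2) (Fin 2) (ZMod L)) =
      !![1, (N : ZMod L)*b; (N : ZMod L)*c, 1 + ((N : ZMod L)*b)*((N : ZMod L)*c)] := by
    rw [hBm, red_Bmat, Bmat_coe, heb, hec]
  -- inverses
  obtain ⟨v, hv⟩ := hu.exists_right_inv
  set ia : ZMod L := v with hiadef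
  set iu : ZMod L := w*w*v with hiudef
  have hu' : ((1 + 2*(N:ℕ)*T : ℤ) : ZMod L) = w*w*(1 + ((N:ZMod L)*b)*((N:ZMod L)*c)) := by
    have := h2
    push_cast at this ⊢
    exact this
  have hiu : (1 + ((N:ZMod L)*b)*((N:ZMod L)*c)) * iu = 1 := by
    rw [hiudef]
    calc (1 + ((N:ZMod L)*b)*((N:ZMod L)*c)) * (w*w*v)
        = (w*w*(1 + ((N:ZMod L)*b)*((N:ZMod L)*c))) * v := by ring
      _ = ((1 + 2*(N:ℕ)*T : ℤ) : ZMod L) * v := by rw [← hu']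
      _ = 1 := hv
  -- entries of red L g₁
  set ua : ZMod L := ((A + Bq*sInt : ℤ) : ZMod L) with huadef
  set bv : ZMod L := ((Bq : ℤ) : ZMod L) with hbvdef
  set gv : ZMod L := ((C + Dq*sInt : ℤ) : ZMod L) with hgvdef
  set dv : ZMod L := ((Dq : ℤ) : ZMod L) with hdvdef
  have hred : ((red L g₁ : SL(2, ZMod L)) : Matrix (Fin 2) (Fin 2) (ZMod L)) =
      !![ua, bv; gv, dv] := by
    show (Matrix.map _ _) = _
    rw [hg₁coe, map_fin_two]
    exact mat2_ext _ _ _ _ _ _ _ _ rfl rfl rfl rfl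
  have huau : ua = ((1 + 2*(N:ℕ)*T : ℤ) : ZMod L) := by
    rw [huadef, ha₁]
  have hia : ua * ia = 1 := by rw [huau, hiadef]; exact hv
  have hdet₁ : ua * dv - bv * gv = 1 := by
    have h := g₁.property
    rw [hg₁coe, Matrix.det_fin_two_of] at h
    have := congrArg (fun z : ℤ => ((z : ZMod L))) h
    push_cast at this
    rw [huadef, hbvdef, hgvdef, hdvdef]
    push_cast
    linear_combination this
  have ha : ua = w * w * (1 + ((N:ZMod L)*b)*((N:ZMod L)*c)) := by rw [huau, hu']
  -- the grand identity
  have hident : red L g₁ =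
      E21 (gv * ia) * (red L W * red L W) *
      E21 (-(((N:ZMod L)*c)*(2+((N:ZMod L)*b)*((N:ZMod L)*c))*iu)) *
      (red L Bm * red L Bm) *
      E12 (-(((N:ZMod L)*b)*(2+((N:ZMod L)*b)*((N:ZMod L)*c))*iu)) *
      E12 (ia * bv) := by
    apply Subtype.ext
    simp only [Matrix.SpecialLinearGroup.coe_mul]
    rw [hred, hWcoe, hBmcoe, E21_coe, E21_coe, E12_coe, E12_coe]
    rw [matrix_decomp ua bv gv dv ia w iw ((N:ZMod L)*b) ((N:ZMod L)*c) iu hdet₁ hia h0 ha hiu]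
    simp only [Matrix.mul_assoc]
  -- memberships
  have hredmem : red L g₁ ∈ K := by
    rw [hident]
    refine Subgroup.mul_mem _ (Subgroup.mul_mem _ (Subgroup.mul_mem _ (Subgroup.mul_mem _
      (Subgroup.mul_mem _ ?_ ?_) ?_) ?_) ?_) ?_
    · -- E21 (gv * ia)
      obtain ⟨G, hG⟩ : ∃ G : ℤ, C + Dq*sInt = 2*(N:ℤ)*G := ⟨k3 + Dq*t₀, by
        rw [hsInt]; push_cast at hk3; linarith [hk3]⟩
      have : gv * ia = 2*(N:ZMod L)*(((G : ℤ) : ZMod L) * ia) := by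
        rw [hgvdef, hG]; push_cast; ring
      rw [this]; exact hEK21 _
    · -- red W * red W
      refine ⟨W * W, hsq W hWΓ, ?_⟩
      rw [_root_.map_mul]
    · -- E21 (-ξ)
      have : (-(((N:ZMod L)*c)*(2+((N:ZMod L)*b)*((N:ZMod L)*c))*iu)) =
          2*(N:ZMod L)*(-(x*iu)) := by
        rw [show ((N:ZMod L)*c)*(2+((N:ZMod L)*b)*((N:ZMod L)*c)) = 2*(N:ZMod L)*x from h3]
        ring
      rw [this]; exact hEK21 _
    · -- red Bm * red Bm
      refine ⟨Bm * Bm, hsq Bm hBmΓ, ?_⟩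
      rw [_root_.map_mul]
    · -- E12 (-η)
      have : (-(((N:ZMod L)*b)*(2+((N:ZMod L)*b)*((N:ZMod L)*c))*iu)) =
          2*(N:ZMod L)*(-(y*iu)) := by
        rw [show ((N:ZMod L)*b)*(2+((N:ZMod L)*b)*((N:ZMod L)*c)) = 2*(N:ZMod L)*y from h4]
        ring
      rw [this]; exact hEK12 _
    · -- E12 (ia * bv)
      have : ia * bv = 2*(N:ZMod L)*(((k2 : ℤ) : ZMod L) * ia) := by
        rw [hbvdef, hk2]; push_cast; ring
      rw [this]; exact hEK12 _
  -- pull back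
  obtain ⟨h, hhH, hhred⟩ := hredmem
  have hker : h⁻¹ * g₁ ∈ Gamma L := by
    rw [Gamma_eq_ker, MonoidHom.mem_ker, _root_.map_mul, map_inv, hhred]
    exact inv_mul_cancel _
  have hg₁H : g₁ ∈ H := by
    have : g₁ = h * (h⁻¹ * g₁) := by group
    rw [this]
    exact Subgroup.mul_mem _ hhH (le_sup_right (b := Gamma L) hker)
  have hEinv : E21 (-sInt) ∈ H := by
    have : E21 (-sInt) = E21 (2*(N:ℤ)*(-t₀)) := by rw [hsInt]; ring_nf
    rw [this]
    exact hE21H _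
  have : g = g₁ * E21 (-sInt) := by
    rw [hg₁, mul_assoc, E21_mul, add_neg_cancel, E21_zero, mul_one]
  rw [this]
  exact Subgroup.mul_mem _ hg₁H hEinv

end CLL

/-- If Γ̄(N) ≤ Γ̄ ≤ Γ̄₀(N) with N > 1, then any congruence lift Γ of Γ̄
contains Γ(2N) and has level N or 2N. -/
theorem congruence_lift_level (N : ℕ) (hN : 1 < N) (Γbar : Subgroup PSL2Z)
    (h1 : Subgroup.map proj (Gamma N) ≤ Γbar)
    (h2 : Γbar ≤ Subgroup.map proj (Gamma0 N))
    (Γ : Subgroup SL(2, ℤ)) (hlift : Subgroup.map proj Γ = Γbar)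
    (hcong : IsCongruence Γ) :
    Gamma (2 * N) ≤ Γ ∧
      (sInf {M : ℕ | 0 < M ∧ Gamma M ≤ Γ} = N ∨
        sInf {M : ℕ | 0 < M ∧ Gamma M ≤ Γ} = 2 * N) := by
  classical
  obtain ⟨M, hM, hMle⟩ := hcong
  have hneg_pow : ∀ k : ℤ, ((-1 : SL(2,ℤ))^k) * ((-1 : SL(2,ℤ))^k) = 1 := by
    intro k
    have hz2 : ((-1 : SL(2,ℤ))^(2:ℤ)) = 1 := by
      rw [show (2:ℤ) = 1+1 from rfl, _root_.zpow_add, zpow_one]; simp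
    rw [← _root_.zpow_add, show k + k = 2*k by ring, _root_.zpow_mul, hz2, _root_.one_zpow]
  -- squares of things whose image is in (image of Γ) are in Γ
  have hsq_of_proj : ∀ x : SL(2,ℤ), proj x ∈ Subgroup.map proj Γ → x * x ∈ Γ := by
    intro x hpx
    obtain ⟨γ, hγΓ, hγ⟩ := Subgroup.mem_map.mp hpx
    have hmem : γ⁻¹ * x ∈ Subgroup.zpowers (-1 : SL(2,ℤ)) := by
      have hker : proj (γ⁻¹ * x) = 1 := by
        rw [_root_.map_mul, map_inv, hγ]
        group
      rwa [show Subgroup.zpowers (-1 : SL(2,ℤ)) =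
        (QuotientGroup.mk' (Subgroup.zpowers (-1 : SL(2,ℤ)))).ker from
        (QuotientGroup.ker_mk' _).symm, MonoidHom.mem_ker]
    obtain ⟨k, hk⟩ := hmem
    have hk2 : (-1 : SL(2,ℤ))^k = γ⁻¹ * x := hk
    have hx2 : x = γ * (-1 : SL(2,ℤ))^k := by rw [hk2]; group
    have hcomm := (Commute.neg_one_left γ).zpow_left k
    have hxx : x * x = (γ * γ) * (((-1 : SL(2,ℤ))^k) * ((-1 : SL(2,ℤ))^k)) := by
      calc x * x = γ * (((-1 : SL(2,ℤ))^k) * γ) * (-1 : SL(2,ℤ))^k := by rw [hx2]; group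
        _ = γ * (γ * ((-1 : SL(2,ℤ))^k)) * (-1 : SL(2,ℤ))^k := by rw [hcomm.eq]
        _ = (γ * γ) * (((-1 : SL(2,ℤ))^k) * ((-1 : SL(2,ℤ))^k)) := by group
    rw [hxx, hneg_pow, mul_one]
    exact Subgroup.mul_mem _ hγΓ hγΓ
  have hsqΓ : ∀ x ∈ Gamma N, x * x ∈ Γ := by
    intro x hx
    apply hsq_of_proj
    rw [hlift]
    exact h1 (Subgroup.mem_map.mpr ⟨x, hx, rfl⟩)
  -- main containment
  have hG2N : Gamma (2*N) ≤ Γ := by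
    refine (CLL.key N M (by omega) hM).trans (sup_le ?_ ?_)
    · rw [Subgroup.closure_le]
      rintro x ⟨y, hy, rfl⟩
      exact hsqΓ y hy
    · exact (CLL.Gamma_anti ⟨2*N, by ring⟩).trans hMle
  refine ⟨hG2N, ?_⟩
  -- the level is N or 2N
  set S : Set ℕ := {M' : ℕ | 0 < M' ∧ Gamma M' ≤ Γ} with hS
  have h2NS : 2*N ∈ S := ⟨by omega, hG2N⟩
  have hne : S.Nonempty := ⟨2*N, h2NS⟩
  obtain ⟨hpos, hle⟩ := Nat.sInf_mem hne
  have hdvd : ∀ K ∈ S, N ∣ K := by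
    rintro K ⟨hK0, hKle⟩
    have hEK : CLL.E21 ((K : ℕ) : ℤ) ∈ Γ :=
      hKle (CLL.E21_mem_Gamma K _ ⟨1, (mul_one _).symm⟩)
    have hp : proj (CLL.E21 ((K : ℕ) : ℤ)) ∈ Subgroup.map proj (Gamma0 N) := by
      apply h2
      rw [← hlift]
      exact Subgroup.mem_map.mpr ⟨_, hEK, rfl⟩
    obtain ⟨P, hP0, hPp⟩ := Subgroup.mem_map.mp hp
    have hmem : P⁻¹ * CLL.E21 ((K : ℕ) : ℤ) ∈ Subgroup.zpowers (-1 : SL(2,ℤ)) := by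
      have hker : proj (P⁻¹ * CLL.E21 ((K : ℕ) : ℤ)) = 1 := by
        rw [_root_.map_mul, map_inv, hPp]
        group
      rwa [show Subgroup.zpowers (-1 : SL(2,ℤ)) =
        (QuotientGroup.mk' (Subgroup.zpowers (-1 : SL(2,ℤ)))).ker from
        (QuotientGroup.ker_mk' _).symm, MonoidHom.mem_ker]
    obtain ⟨k, hk⟩ := hmem
    have hk2 : (-1 : SL(2,ℤ))^k = P⁻¹ * CLL.E21 ((K : ℕ) : ℤ) := hk
    have hPE : CLL.E21 ((K : ℕ) : ℤ) = P * (-1 : SL(2,ℤ))^k := by rw [hk2]; group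
    have hcast : ((K : ℤ) : ZMod N) = 0 ∨ ((-(K : ℤ) : ℤ) : ZMod N) = 0 := by
      rcases Int.even_or_odd k with hek | hok
      · left
        obtain ⟨m, rfl⟩ := hek
        have hpow : (-1 : SL(2,ℤ))^(m+m) = 1 := by
          rw [_root_.zpow_add]; exact hneg_pow m
        rw [hpow, mul_one] at hPE
        have := hP0
        rw [← hPE] at this
        rw [Gamma0_mem] at this
        exact this
      · right
        obtain ⟨m, rfl⟩ := hok
        have hpow : (-1 : SL(2,ℤ))^(2*m+1) = -1 := by
          rw [_root_.zpow_add, _root_.zpow_mul, zpow_one]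
          have hz2 : ((-1 : SL(2,ℤ))^(2:ℤ)) = 1 := by
            rw [show (2:ℤ) = 1+1 from rfl, _root_.zpow_add, zpow_one]
            simp
          rw [hz2, _root_.one_zpow, one_mul]
        rw [hpow] at hPE
        have hP : P = -(CLL.E21 ((K : ℕ) : ℤ)) := by
          have := hPE
          rw [mul_neg, mul_one] at this
          rw [this]; simp
        rw [hP] at hP0
        rw [Gamma0_mem] at hP0
        have hentry : ((-(CLL.E21 ((K : ℕ) : ℤ)) : SL(2,ℤ)) :
            Matrix (Fin 2) (Fin 2) ℤ) 1 0 = -(K : ℤ) := by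
          rw [Matrix.SpecialLinearGroup.coe_neg]; simp [CLL.E21]
        rw [show ((-(CLL.E21 ((K : ℕ) : ℤ)) : SL(2,ℤ)) 1 0 : ℤ) = -(K : ℤ) from hentry] at hP0
        exact hP0
    have : ((K : ℤ) : ZMod N) = 0 := by
      rcases hcast with h | h
      · exact h
      · have hneg : (-((K : ℤ) : ZMod N)) = 0 := by push_cast at h ⊢; exact h
        exact neg_eq_zero.mp hneg
    rw [ZMod.intCast_zmod_eq_zero_iff_dvd] at this
    exact_mod_cast this
  have hNd : N ∣ sInf S := hdvd _ ⟨hpos, hle⟩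
  have hle2N : sInf S ≤ 2*N := Nat.sInf_le h2NS
  obtain ⟨q, hq⟩ := hNd
  have hNq : 0 < N * q := by rw [← hq]; exact hpos
  have h1q : 1 ≤ q := by
    rcases Nat.eq_zero_or_pos q with rfl | h
    · simp at hNq
    · exact h
  have hle' : N * q ≤ 2 * N := by rw [← hq]; exact hle2N
  have hq2 : q ≤ 2 := by nlinarith
  have hq12 : q = 1 ∨ q = 2 := by omega
  rcases hq12 with rfl | rfl
  · left; omega
  · right; omega
end

section
/- Let N ∈ ℕ with 4 ∤ N and all odd prime divisors of N congruent to 1 mod 4. Then the only subgroup Γ ≤ SL₂(ℤ) whose image in PSL₂(ℤ) equals the image of Γ₀(N) is Γ₀(N) itself; in particular all lifts of the projective image of Γ₀(N) are congruence. -/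
open Matrix CongruenceSubgroup
open scoped MatrixGroups

lemma hensel_neg_one (p : ℕ) (hp : p.Prime) (hp4 : p % 4 = 1) :
    ∀ k : ℕ, ∃ a : ℤ, (p : ℤ) ^ k ∣ a ^ 2 + 1 := by
  haveI : Fact p.Prime := ⟨hp⟩
  have hp2 : p ≠ 2 := by omega
  intro k
  induction k with
  | zero => exact ⟨0, by norm_num⟩
  | succ k ih =>
    match k, ih with
    | 0, _ =>
      obtain ⟨x, hx⟩ := (ZMod.exists_sq_eq_neg_one_iff (p := p)).2 (by omega)
      refine ⟨(x.val : ℤ), ?_⟩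
      rw [pow_one, ← ZMod.intCast_zmod_eq_zero_iff_dvd]
      push_cast
      simp only [ZMod.natCast_val, ZMod.cast_id]
      linear_combination -hx
    | j + 1, ⟨a, ha⟩ =>
      obtain ⟨m, hm⟩ := ha
      have hpdvd : (p : ℤ) ∣ a ^ 2 + 1 := dvd_trans (dvd_pow_self _ (Nat.succ_ne_zero j)) ⟨m, hm⟩
      have ha0 : (a : ZMod p) ≠ 0 := by
        intro h
        have h1 : ((a ^ 2 + 1 : ℤ) : ZMod p) = 0 := by
          rwa [ZMod.intCast_zmod_eq_zero_iff_dvd]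
        push_cast at h1
        rw [h, zero_pow two_ne_zero, zero_add] at h1
        exact one_ne_zero h1
      have h2a : (2 * a : ZMod p) ≠ 0 := by
        refine mul_ne_zero ?_ ha0
        have h2 : ((2 : ℕ) : ZMod p) ≠ 0 := by
          rw [Ne, ZMod.natCast_eq_zero_iff]
          exact fun h => hp2 ((Nat.prime_dvd_prime_iff_eq hp Nat.prime_two).1 h)
        exact_mod_cast h2
      set t' : ZMod p := -(m : ZMod p) / (2 * a) with ht'
      set t : ℤ := (t'.val : ℤ) with ht
      have htc : ((t : ℤ) : ZMod p) = t' := by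
        rw [ht]; push_cast; simp [ZMod.natCast_val, ZMod.cast_id]
      have hkey : (p : ℤ) ∣ m + 2 * a * t := by
        rw [← ZMod.intCast_zmod_eq_zero_iff_dvd]
        push_cast
        rw [htc, ht', mul_div_cancel₀ _ h2a]
        ring
      obtain ⟨c, hc⟩ := hkey
      refine ⟨a + t * (p : ℤ) ^ (j + 1), c + t ^ 2 * (p : ℤ) ^ j, ?_⟩
      linear_combination hm + (p : ℤ) ^ (j + 1) * hc

lemma sq_neg_one_zmod (N : ℕ) (h4 : ¬ (4 ∣ N))
    (hp : ∀ p : ℕ, p.Prime → p ∣ N → Odd p → p % 4 = 1) :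
    IsSquare (-1 : ZMod N) := by
  induction N using Nat.recOnPosPrimePosCoprime with
  | prime_pow p n hpp hn =>
    have hpp' : p.Prime := hpp
    rcases eq_or_ne p 2 with rfl | hp2
    · have hn1 : n = 1 := by
        by_contra h
        have h2 : 2 ≤ n := by omega
        exact h4 (by calc (4:ℕ) = 2 ^ 2 := by norm_num
          _ ∣ 2 ^ n := pow_dvd_pow 2 h2)
      subst hn1
      exact ⟨1, by decide⟩
    · have hodd : Odd p := hpp'.odd_of_ne_two hp2
      have h41 : p % 4 = 1 := hp p hpp' (dvd_pow_self p hn.ne') hodd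
      obtain ⟨a, ha⟩ := hensel_neg_one p hpp' h41 n
      refine ⟨(a : ZMod (p ^ n)), ?_⟩
      have : ((a ^ 2 + 1 : ℤ) : ZMod (p ^ n)) = 0 := by
        rw [ZMod.intCast_zmod_eq_zero_iff_dvd]
        exact_mod_cast ha
      push_cast at this
      linear_combination -this
  | zero => exact absurd (dvd_zero 4) h4
  | one => exact ⟨0, Subsingleton.elim _ _⟩
  | coprime a b ha1 hb1 hab iha ihb =>
    refine ZMod.isSquare_neg_one_mul hab ?_ ?_
    · exact iha (fun h => h4 (h.mul_right b)) fun p hpp hpd hpo => hp p hpp (hpd.mul_right b) hpo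
    · exact ihb (fun h => h4 (h.mul_left a)) fun p hpp hpd hpo => hp p hpp (hpd.mul_left a) hpo

lemma neg_one_mem_Gamma0 (N : ℕ) : (-1 : SL(2, ℤ)) ∈ Gamma0 N := by
  simp [Gamma0_mem]

lemma zpowers_sq {z : SL(2, ℤ)} (hz : z ∈ Subgroup.zpowers (-1 : SL(2, ℤ))) : z * z = 1 := by
  obtain ⟨k, rfl⟩ := hz
  rw [← _root_.zpow_add]
  exact Even.neg_one_zpow ⟨k, rfl⟩

lemma Gamma_le_Gamma0' (N : ℕ) : Gamma N ≤ Gamma0 N := by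
  intro A hA
  rw [Gamma_mem] at hA
  rw [Gamma0_mem]
  exact hA.2.2.1


/-- If 4 ∤ N and all odd prime divisors of N are ≡ 1 mod 4, then the only
subgroup of SL₂(ℤ) with the same projective image as Γ₀(N) is Γ₀(N) itself;
in particular all lifts of the projective image of Γ₀(N) are congruence. -/
theorem all_lifts_of_gamma0_congruence (N : ℕ) (h4 : ¬ (4 ∣ N))
    (hp : ∀ p : ℕ, p.Prime → p ∣ N → Odd p → p % 4 = 1)
    (Γ : Subgroup SL(2, ℤ))
    (hlift : Subgroup.map proj Γ = Subgroup.map proj (Gamma0 N)) :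
    Γ = Gamma0 N ∧ IsCongruence Γ := by
  have hN0 : N ≠ 0 := fun h => h4 (h ▸ dvd_zero 4)
  haveI : NeZero N := ⟨hN0⟩
  have hmain : Γ = Gamma0 N := by
    obtain ⟨x, hx⟩ := sq_neg_one_zmod N h4 hp
    set a : ℤ := (x.val : ℤ) with ha
    have hxx : ((a : ℤ) : ZMod N) = x := by
      rw [ha]
      push_cast
      simp [ZMod.natCast_val, ZMod.cast_id]
    have hNa : (N : ℤ) ∣ a ^ 2 + 1 := by
      rw [← ZMod.intCast_zmod_eq_zero_iff_dvd, Int.cast_add, Int.cast_pow, Int.cast_one, hxx]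
      linear_combination -hx
    set g : SL(2, ℤ) := ⟨!![a, 1; -(a ^ 2 + 1), -a], by simp [Matrix.det_fin_two_of]; ring⟩
      with hg
    have hg0 : g ∈ Gamma0 N := by
      rw [Gamma0_mem]
      show ((-(a ^ 2 + 1) : ℤ) : ZMod N) = 0
      rw [Int.cast_neg, neg_eq_zero, ZMod.intCast_zmod_eq_zero_iff_dvd]
      exact hNa
    have hgg : g * g = -1 := by
      ext i j
      rw [Matrix.SpecialLinearGroup.coe_mul]
      fin_cases i <;> fin_cases j <;>
        simp [hg, Matrix.mul_apply, Fin.sum_univ_two] <;> ring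
    have hproj : proj g ∈ Subgroup.map proj Γ := by
      rw [hlift]
      exact ⟨g, hg0, rfl⟩
    obtain ⟨y, hyΓ, hy⟩ := hproj
    rw [show proj = QuotientGroup.mk' (Subgroup.zpowers (-1 : SL(2, ℤ))) from rfl,
      QuotientGroup.mk'_eq_mk'] at hy
    obtain ⟨z, hz, hyz⟩ := hy
    have hcomm : Commute z y := by
      obtain ⟨k, rfl⟩ := hz
      exact (Commute.neg_one_left y).zpow_left k
    have hneg : (-1 : SL(2, ℤ)) ∈ Γ := by
      have h1 : y * y = -1 := by
        have h2 : g * g = y * y * (z * z) := by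
          rw [← hyz, hcomm.mul_mul_mul_comm]
        rw [h2, zpowers_sq hz, mul_one] at hgg
        exact hgg
      exact h1 ▸ Γ.mul_mem hyΓ hyΓ
    have hzΓ : Subgroup.zpowers (-1 : SL(2, ℤ)) ≤ Γ := Subgroup.zpowers_le.2 hneg
    have hzΓ0 : Subgroup.zpowers (-1 : SL(2, ℤ)) ≤ Gamma0 N :=
      Subgroup.zpowers_le.2 (neg_one_mem_Gamma0 N)
    apply le_antisymm
    · intro u hu
      have h3 : proj u ∈ Subgroup.map proj (Gamma0 N) := hlift ▸ ⟨u, hu, rfl⟩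
      obtain ⟨v, hv, hvu⟩ := h3
      rw [show proj = QuotientGroup.mk' (Subgroup.zpowers (-1 : SL(2, ℤ))) from rfl,
        QuotientGroup.mk'_eq_mk'] at hvu
      obtain ⟨w, hw, hvw⟩ := hvu
      exact hvw ▸ (Gamma0 N).mul_mem hv (hzΓ0 hw)
    · intro u hu
      have h3 : proj u ∈ Subgroup.map proj Γ := by
        rw [hlift]; exact ⟨u, hu, rfl⟩
      obtain ⟨v, hv, hvu⟩ := h3
      rw [show proj = QuotientGroup.mk' (Subgroup.zpowers (-1 : SL(2, ℤ))) from rfl,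
        QuotientGroup.mk'_eq_mk'] at hvu
      obtain ⟨w, hw, hvw⟩ := hvu
      exact hvw ▸ Γ.mul_mem hv (hzΓ hw)
  exact ⟨hmain, N, Nat.pos_of_ne_zero hN0, hmain ▸ Gamma_le_Gamma0' N⟩
end
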